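/- arXiv:2303.14021 — 6 statements merged into one kernel-verified Lean document; each statement's English description precedes it below -/
import Mathlib

section
/- Assume the standing assumptions on f and g. Let α > 0, ε ≥ 0, let x_t ∈ X and let x_{t+1} be an ε-minimizer of z ↦ f(z) + (1/(2α))‖z − (x_t − α∇g(x_t))‖². Then for every x ∈ X: (f+g)(x) − (f+g)(x_{t+1}) ≥ ⟨(x_t − x_{t+1})/α, x − x_{t+1}⟩ − (ρ/2)‖x − x_{t+1}‖² − (L_g/2)‖x_t − x_{t+1}‖² − ε − √(2ε/α)·‖x − x_{t+1}‖. -/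
open Metric
open scoped RealInnerProductSpace


private lemma hasDerivAt_line {X : Type*} [NormedAddCommGroup X] [InnerProductSpace ℝ X]
    [CompleteSpace X] (g : X → ℝ) (g' : X → X)
    (hg : ∀ x, HasGradientAt g (g' x) x) (a v : X) (t : ℝ) :
    HasDerivAt (fun s : ℝ => g (a + s • v)) ⟪g' (a + t • v), v⟫ t := by
  have hline : HasDerivAt (fun s : ℝ => a + s • v) v t := by
    simpa using ((hasDerivAt_id t).smul_const v).const_add a
  have := (hg (a + t • v)).hasFDerivAt.comp_hasDerivAt t hline
  simpa [InnerProductSpace.toDual_apply_apply, Function.comp_def] using this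

private lemma conv_grad {X : Type*} [NormedAddCommGroup X] [InnerProductSpace ℝ X]
    [CompleteSpace X] (g : X → ℝ) (g' : X → X) (hg_conv : ConvexOn ℝ Set.univ g)
    (hg_diff : ∀ x, HasGradientAt g (g' x) x) (a b : X) :
    g a + ⟪g' a, b - a⟫ ≤ g b := by
  have hconv : ConvexOn ℝ Set.univ (fun t : ℝ => g (a + t • (b - a))) := by
    refine ⟨convex_univ, ?_⟩
    intro t1 _ t2 _ p q hp hq hpq
    have he : p • (a + t1 • (b - a)) + q • (a + t2 • (b - a))
        = (p + q) • a + (p * t1 + q * t2) • (b - a) := by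
      simp only [smul_add, smul_smul, add_smul]; abel
    rw [hpq, one_smul] at he
    simp only [smul_eq_mul]
    calc g (a + (p * t1 + q * t2) • (b - a)) = g (p • (a + t1 • (b - a)) + q • (a + t2 • (b - a))) := by rw [he]
      _ ≤ p * g (a + t1 • (b - a)) + q * g (a + t2 • (b - a)) := by
          simpa only [smul_eq_mul] using hg_conv.2 (Set.mem_univ _) (Set.mem_univ _) hp hq hpq
  have hD : HasDerivAt (fun t : ℝ => g (a + t • (b - a))) ⟪g' a, b - a⟫ 0 := by
    simpa using hasDerivAt_line g g' hg_diff a (b - a) 0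
  have h := hconv.le_slope_of_hasDerivAt (Set.mem_univ 0) (Set.mem_univ 1) one_pos hD
  rw [slope_def_field] at h
  simp only [one_smul, zero_smul, add_zero, sub_zero, div_one, add_sub_cancel] at h
  linarith

private lemma descent_ineq {X : Type*} [NormedAddCommGroup X] [InnerProductSpace ℝ X]
    [CompleteSpace X] (g : X → ℝ) (g' : X → X) (Lg : ℝ)
    (hg_diff : ∀ x, HasGradientAt g (g' x) x)
    (hg_lip : ∀ x y, ‖g' x - g' y‖ ≤ Lg * ‖x - y‖) (a b : X) :
    g b ≤ g a + ⟪g' a, b - a⟫ + Lg / 2 * ‖b - a‖ ^ 2 := by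
  set v := b - a with hv
  set ψ : ℝ → ℝ := fun t => g (a + t • v) - t * ⟪g' a, v⟫ - Lg / 2 * (t ^ 2 * ‖v‖ ^ 2) with hψ
  have hψd : ∀ t : ℝ, HasDerivAt ψ
      (⟪g' (a + t • v), v⟫ - ⟪g' a, v⟫ - Lg * (t * ‖v‖ ^ 2)) t := by
    intro t
    have h1 := hasDerivAt_line g g' hg_diff a v t
    have h2 : HasDerivAt (fun s : ℝ => s * ⟪g' a, v⟫) ⟪g' a, v⟫ t := by
      simpa using (hasDerivAt_id t).mul_const (⟪g' a, v⟫)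
    have h3 : HasDerivAt (fun s : ℝ => Lg / 2 * (s ^ 2 * ‖v‖ ^ 2)) (Lg * (t * ‖v‖ ^ 2)) t := by
      have h4 : HasDerivAt (fun s : ℝ => s ^ 2) (2 * t) t := by simpa using hasDerivAt_pow 2 t
      have h5 := ((h4.mul_const (‖v‖ ^ 2)).const_mul (Lg / 2))
      rw [show Lg * (t * ‖v‖ ^ 2) = Lg / 2 * (2 * t * ‖v‖ ^ 2) by ring]; exact h5
    exact (h1.sub h2).sub h3
  have mono : AntitoneOn ψ (Set.Icc 0 1) := by
    apply antitoneOn_of_deriv_nonpos (convex_Icc 0 1)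
    · exact fun t _ => (hψd t).continuousAt.continuousWithinAt
    · exact fun t _ => ((hψd t).differentiableAt).differentiableWithinAt
    · intro t ht
      rw [interior_Icc] at ht
      rw [(hψd t).deriv]
      have hb := hg_lip (a + t • v) a
      have he : a + t • v - a = t • v := by abel
      rw [he, norm_smul, Real.norm_eq_abs, abs_of_pos ht.1] at hb
      have hcs := real_inner_le_norm (g' (a + t • v) - g' a) v
      rw [inner_sub_left] at hcs
      nlinarith [norm_nonneg v, norm_nonneg (g' (a + t • v) - g' a),
        mul_le_mul_of_nonneg_right hb (norm_nonneg v)]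
  have h01 := mono (Set.mem_Icc.2 ⟨le_refl 0, zero_le_one⟩) (Set.mem_Icc.2 ⟨zero_le_one, le_refl 1⟩)
    zero_le_one
  have hab : a + (1 : ℝ) • v = b := by rw [hv]; simp
  simp only [hψ, hab, zero_smul, add_zero, zero_mul, one_mul, one_pow, zero_pow, sub_zero,
    mul_zero] at h01
  linarith

private lemma key_opt (α ε D C : ℝ) (hα : 0 < α) (hε : 0 ≤ ε) (hD : 0 ≤ D)
    (h : ∀ l : ℝ, 0 < l → l ≤ 1 → 0 ≤ 2 * l * C + l ^ 2 * D ^ 2 + 2 * α * ε) :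
    0 ≤ C + α * ε + α * (Real.sqrt (2 * ε / α) * D) := by
  set s := Real.sqrt (2 * ε / α) with hs
  have hs0 : 0 ≤ s := Real.sqrt_nonneg _
  have hs2 : s ^ 2 = 2 * ε / α := Real.sq_sqrt (by positivity)
  have hαs : α * s ^ 2 = 2 * ε := by rw [hs2]; field_simp
  rcases eq_or_lt_of_le hε with hε0 | hε0
  · obtain rfl : ε = 0 := hε0.symm
    have hsz : s = 0 := by rw [hs]; simp
    rcases eq_or_lt_of_le hD with hD0 | hD0
    · obtain rfl : D = 0 := hD0.symm
      have h1 := h 1 one_pos le_rfl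
      rw [hsz]; nlinarith [h1]
    · rw [hsz]
      by_contra hc
      push_neg at hc
      have hC : C < 0 := by nlinarith [hc]
      set l := min 1 (-C / D ^ 2) with hl
      have hl0 : 0 < l := lt_min one_pos (div_pos (neg_pos.2 hC) (by positivity))
      have hl1 : l ≤ 1 := min_le_left _ _
      have h1 := h l hl0 hl1
      have h2 : l ≤ -C / D ^ 2 := min_le_right _ _
      have h3 : l * D ^ 2 ≤ -C := by
        rw [le_div_iff₀ (by positivity : (0:ℝ) < D ^ 2)] at h2; linarith
      nlinarith [h1, mul_le_mul_of_nonneg_left h3 hl0.le]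
  · have hsp : 0 < s := Real.sqrt_pos.2 (by positivity)
    rcases le_or_gt D (α * s) with hcase | hcase
    · have h1 := h 1 one_pos le_rfl
      nlinarith [h1, mul_le_mul_of_nonneg_right hcase hD, mul_nonneg (mul_nonneg hα.le hs0) hD]
    · have hD0 : 0 < D := lt_trans (by positivity) hcase
      set l := α * s / D with hl
      have hl0 : 0 < l := by positivity
      have hl1 : l ≤ 1 := by rw [hl, div_le_one hD0]; exact hcase.le
      have hlD : l * D = α * s := by rw [hl]; field_simp
      have h1 := h l hl0 hl1
      have hl2 : l ^ 2 * D ^ 2 = α ^ 2 * s ^ 2 := by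
        calc l ^ 2 * D ^ 2 = (l * D) ^ 2 := by ring
          _ = (α * s) ^ 2 := by rw [hlD]
          _ = α ^ 2 * s ^ 2 := by ring
      have h3 : 2 * α * ε = α ^ 2 * s ^ 2 := by linear_combination (-α) * hαs
      have h2 : 0 ≤ l * (C + α * ε + α * (s * D)) := by
        have he : l * (C + α * ε + α * (s * D)) = l * C + l * (α * ε) + α * s * (l * D) := by ring
        rw [he, hlD]
        nlinarith [h1, hl2, h3, mul_nonneg (mul_nonneg hl0.le hα.le) hε]
      nlinarith [h2, hl0]

/-- key estimate for one step of the inexact forward–backward algorithm.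
Under the standing assumptions (f proper, lsc, ρ-weakly convex, bounded below; g convex,
differentiable with L_g-Lipschitz gradient; argmin(f+g) ≠ ∅), if `x₁` is an `ε`-minimizer of
`z ↦ f z + (1/(2α))‖z − (x₀ − α∇g(x₀))‖²`, then for every `x`:
`(f+g)(x) − (f+g)(x₁) ≥ ⟨(x₀−x₁)/α, x−x₁⟩ − (ρ/2)‖x−x₁‖² − (L_g/2)‖x₀−x₁‖² − ε
  − √(2ε/α)‖x−x₁‖`. -/
theorem stmt_7 {X : Type*} [NormedAddCommGroup X] [InnerProductSpace ℝ X] [CompleteSpace X]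
    (f : X → EReal) (g : X → ℝ) (g' : X → X) (ρ Lg : ℝ) (hρ : 0 ≤ ρ)
    (hf_proper : (∃ x, f x ≠ ⊤) ∧ ∀ x, f x ≠ ⊥)
    (hf_lsc : LowerSemicontinuous f)
    (hf_wc : ∀ x y : X, ∀ l : ℝ, 0 ≤ l → l ≤ 1 →
      f (l • x + (1 - l) • y) ≤ ((l : ℝ) : EReal) * f x + ((1 - l : ℝ) : EReal) * f y +
        ((l * (1 - l) * (ρ / 2) * ‖x - y‖ ^ 2 : ℝ) : EReal))
    (hf_bdd : ∃ m : ℝ, ∀ x, ((m : ℝ) : EReal) ≤ f x)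
    (hg_conv : ConvexOn ℝ Set.univ g)
    (hg_diff : ∀ x, HasGradientAt g (g' x) x)
    (hg_lip : ∀ x y, ‖g' x - g' y‖ ≤ Lg * ‖x - y‖)
    (hS : {x : X | ∀ y : X, f x + ((g x : ℝ) : EReal) ≤ f y + ((g y : ℝ) : EReal)}.Nonempty)
    (α ε : ℝ) (hα : 0 < α) (hε : 0 ≤ ε)
    (x₀ x₁ : X)
    (hx₁ : ∀ z : X,
      f x₁ + ((1 / (2 * α) * ‖x₁ - (x₀ - α • g' x₀)‖ ^ 2 : ℝ) : EReal) ≤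
      f z + ((1 / (2 * α) * ‖z - (x₀ - α • g' x₀)‖ ^ 2 + ε : ℝ) : EReal)) :
    ∀ x : X,
      f x₁ + ((g x₁ + ⟪(α⁻¹ : ℝ) • (x₀ - x₁), x - x₁⟫ - (ρ / 2) * ‖x - x₁‖ ^ 2
          - (Lg / 2) * ‖x₀ - x₁‖ ^ 2 - ε - Real.sqrt (2 * ε / α) * ‖x - x₁‖ : ℝ) : EReal)
        ≤ f x + ((g x : ℝ) : EReal) := by
  intro x
  obtain ⟨⟨z₀, hz₀⟩, hbot⟩ := hf_proper
  set y := x₀ - α • g' x₀ with hy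
  -- f x₁ is finite
  have hx₁top : f x₁ ≠ ⊤ := by
    intro htop
    have h1 := hx₁ z₀
    rw [htop, EReal.top_add_coe] at h1
    have h2 : f z₀ + ((1 / (2 * α) * ‖z₀ - y‖ ^ 2 + ε : ℝ) : EReal) < ⊤ :=
      EReal.add_lt_top hz₀ (EReal.coe_ne_top _)
    exact absurd (top_le_iff.mp h1) h2.ne
  set r₁ := (f x₁).toReal with hr₁def
  have hr₁ : f x₁ = ((r₁ : ℝ) : EReal) := (EReal.coe_toReal hx₁top (hbot x₁)).symm
  by_cases hxtop : f x = ⊤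
  · rw [hxtop, EReal.top_add_coe]
    exact le_top
  set r := (f x).toReal with hrdef
  have hr : f x = ((r : ℝ) : EReal) := (EReal.coe_toReal hxtop (hbot x)).symm
  -- norm expansion
  have hnorm : ∀ l : ℝ, ‖l • x + (1 - l) • x₁ - y‖ ^ 2
      = ‖x₁ - y‖ ^ 2 + 2 * (l * ⟪x₁ - y, x - x₁⟫) + l ^ 2 * ‖x - x₁‖ ^ 2 := by
    intro l
    have he : l • x + (1 - l) • x₁ - y = (x₁ - y) + l • (x - x₁) := by
      simp only [sub_smul, one_smul, smul_sub]; abel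
    rw [he, norm_add_sq_real, real_inner_smul_right, norm_smul, Real.norm_eq_abs, mul_pow, sq_abs]
  -- main family of real inequalities
  have hmain : ∀ l : ℝ, 0 < l → l ≤ 1 →
      0 ≤ 2 * l * (α * (r - r₁ + ρ / 2 * ‖x - x₁‖ ^ 2) + ⟪x₁ - y, x - x₁⟫)
        + l ^ 2 * ‖x - x₁‖ ^ 2 + 2 * α * ε := by
    intro l hl0 hl1
    have hz := hx₁ (l • x + (1 - l) • x₁)
    rw [hr₁] at hz
    have hwc := hf_wc x x₁ l hl0.le hl1
    rw [hr, hr₁] at hwc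
    have h2 := hz.trans (add_le_add_left hwc
      ((1 / (2 * α) * ‖l • x + (1 - l) • x₁ - y‖ ^ 2 + ε : ℝ) : EReal))
    have hre : r₁ + 1 / (2 * α) * ‖x₁ - y‖ ^ 2 ≤
        l * r + (1 - l) * r₁ + l * (1 - l) * (ρ / 2) * ‖x - x₁‖ ^ 2
        + (1 / (2 * α) * ‖l • x + (1 - l) • x₁ - y‖ ^ 2 + ε) := by
      exact_mod_cast h2
    rw [hnorm l] at hre
    have hαne : (α : ℝ) ≠ 0 := hα.ne'
    have h0 : 0 ≤ 1 / (2 * α) * (2 * α * l * (r - r₁)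
        + α * ρ * (l * (1 - l)) * ‖x - x₁‖ ^ 2 + 2 * (l * ⟪x₁ - y, x - x₁⟫)
        + l ^ 2 * ‖x - x₁‖ ^ 2 + 2 * α * ε) := by
      have heq : 1 / (2 * α) * (2 * α * l * (r - r₁)
          + α * ρ * (l * (1 - l)) * ‖x - x₁‖ ^ 2 + 2 * (l * ⟪x₁ - y, x - x₁⟫)
          + l ^ 2 * ‖x - x₁‖ ^ 2 + 2 * α * ε)
          = (l * r + (1 - l) * r₁ + l * (1 - l) * (ρ / 2) * ‖x - x₁‖ ^ 2
            + (1 / (2 * α) * (‖x₁ - y‖ ^ 2 + 2 * (l * ⟪x₁ - y, x - x₁⟫)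
              + l ^ 2 * ‖x - x₁‖ ^ 2) + ε))
            - (r₁ + 1 / (2 * α) * ‖x₁ - y‖ ^ 2) := by
        field_simp
        ring
      rw [heq]
      linarith [hre]
    have hE : 0 ≤ 2 * α * l * (r - r₁)
        + α * ρ * (l * (1 - l)) * ‖x - x₁‖ ^ 2 + 2 * (l * ⟪x₁ - y, x - x₁⟫)
        + l ^ 2 * ‖x - x₁‖ ^ 2 + 2 * α * ε := by
      nlinarith [h0, (by positivity : (0:ℝ) < 1 / (2 * α))]
    nlinarith [hE, mul_nonneg (mul_nonneg (mul_nonneg hα.le hρ) (sq_nonneg l))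
      (sq_nonneg ‖x - x₁‖)]
  have hkey := key_opt α ε ‖x - x₁‖ _ hα hε (norm_nonneg _) hmain
  -- inner product decompositions
  have hIe : x₁ - y = (x₁ - x₀) + α • g' x₀ := by rw [hy]; abel
  have hI : ⟪x₁ - y, x - x₁⟫ = ⟪x₁ - x₀, x - x₁⟫ + α * ⟪g' x₀, x - x₁⟫ := by
    rw [hIe, inner_add_left, real_inner_smul_left]
  have hP2 : α * ⟪(α⁻¹ : ℝ) • (x₀ - x₁), x - x₁⟫ = -⟪x₁ - x₀, x - x₁⟫ := by
    rw [real_inner_smul_left, ← neg_sub x₁ x₀, inner_neg_left]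
    field_simp
  have hsplit : α * ⟪g' x₀, x - x₁⟫ = α * ⟪g' x₀, x - x₀⟫ - α * ⟪g' x₀, x₁ - x₀⟫ := by
    have he : x - x₁ = (x - x₀) - (x₁ - x₀) := by abel
    rw [he, inner_sub_right]; ring
  have hconvg := conv_grad g g' hg_conv hg_diff x₀ x
  have hdesc := descent_ineq g g' Lg hg_diff hg_lip x₀ x₁
  rw [norm_sub_rev x₁ x₀] at hdesc
  have hconvα := mul_le_mul_of_nonneg_left hconvg hα.le
  have hdescα := mul_le_mul_of_nonneg_left hdesc hα.le
  have hfinalα : α * (r₁ + (g x₁ + ⟪(α⁻¹ : ℝ) • (x₀ - x₁), x - x₁⟫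
      - (ρ / 2) * ‖x - x₁‖ ^ 2 - (Lg / 2) * ‖x₀ - x₁‖ ^ 2 - ε
      - Real.sqrt (2 * ε / α) * ‖x - x₁‖)) ≤ α * (r + g x) := by
    nlinarith [hkey, hI, hP2, hsplit, hconvα, hdescα]
  have hfinal := le_of_mul_le_mul_left hfinalα hα
  rw [hr, hr₁]
  exact_mod_cast hfinal
end

section
/- Assume the standing assumptions on f and g. Let α > 0 with 2/α > ρ + L_g, let ε ≥ 0, let x_t ∈ X with f(x_t) finite, and let x_{t+1} be an ε-minimizer of z ↦ f(z) + (1/(2α))‖z − (x_t − α∇g(x_t))‖². Then (f+g)(x_t) − (f+g)(x_{t+1}) ≥ (1/α − ρ/2 − L_g/2)·‖x_t − x_{t+1}‖² − ε − √(2ε/α)·‖x_t − x_{t+1}‖. In particular, if ε = 0 and x_{t+1} ≠ x_t, the objective value strictly decreases. -/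
open Metric
open scoped RealInnerProductSpace

lemma sqrt_dominate' {a b : ℝ} (ha : 0 ≤ a) (hb : 0 ≤ b) (h : a ^ 2 ≤ b ^ 2) : a ≤ b := by
  rw [← Real.sqrt_sq ha, ← Real.sqrt_sq hb]
  exact Real.sqrt_le_sqrt h

lemma descent_aux' {X : Type*} [NormedAddCommGroup X] [InnerProductSpace ℝ X] [CompleteSpace X]
    (g : X → ℝ) (g' : X → X) (Lg : ℝ)
    (hg_diff : ∀ x, HasGradientAt g (g' x) x)
    (hg_lip : ∀ x y, ‖g' x - g' y‖ ≤ Lg * ‖x - y‖)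
    (x v : X) : g (x + v) ≤ g x + ⟪g' x, v⟫ + Lg / 2 * ‖v‖ ^ 2 := by
  set φ : ℝ → ℝ := fun t => g (x + t • v) - t * ⟪g' x, v⟫ - Lg / 2 * t ^ 2 * ‖v‖ ^ 2 with hφ
  have hderiv : ∀ t : ℝ, HasDerivAt φ
      (⟪g' (x + t • v), v⟫ - ⟪g' x, v⟫ - Lg * t * ‖v‖ ^ 2) t := by
    intro t
    have h1 : HasDerivAt (fun t : ℝ => x + t • v) v t := by
      simpa using ((hasDerivAt_id t).smul_const v).const_add x
    have h2 := ((hg_diff (x + t • v)).hasFDerivAt).comp_hasDerivAt t h1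
    have h2' : HasDerivAt (fun t : ℝ => g (x + t • v)) ⟪g' (x + t • v), v⟫ t := by
      simp [InnerProductSpace.toDual_apply_apply] at h2
      exact h2
    have h3 : HasDerivAt (fun t : ℝ => t * ⟪g' x, v⟫) ⟪g' x, v⟫ t := by
      simpa using (hasDerivAt_id t).mul_const ⟪g' x, v⟫
    have h4 : HasDerivAt (fun t : ℝ => Lg / 2 * t ^ 2 * ‖v‖ ^ 2)
        (Lg * t * ‖v‖ ^ 2) t := by
      have := ((hasDerivAt_pow 2 t).const_mul (Lg / 2)).mul_const (‖v‖ ^ 2)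
      refine this.congr_deriv ?_
      ring
    exact (h2'.sub h3).sub h4
  have hdiff : Differentiable ℝ φ := fun t => (hderiv t).differentiableAt
  have hmono : AntitoneOn φ (Set.Icc (0:ℝ) 1) := by
    apply antitoneOn_of_deriv_nonpos (convex_Icc 0 1) hdiff.continuous.continuousOn
      hdiff.differentiableOn
    intro t ht
    rw [interior_Icc] at ht
    rw [(hderiv t).deriv]
    have h5 : ⟪g' (x + t • v) - g' x, v⟫ ≤ ‖g' (x + t • v) - g' x‖ * ‖v‖ :=
      real_inner_le_norm _ _
    have h6 : ‖g' (x + t • v) - g' x‖ ≤ Lg * (t * ‖v‖) := by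
      have := hg_lip (x + t • v) x
      simpa [norm_smul, abs_of_nonneg ht.1.le] using this
    have h8 : ‖g' (x + t • v) - g' x‖ * ‖v‖ ≤ Lg * (t * ‖v‖) * ‖v‖ :=
      mul_le_mul_of_nonneg_right h6 (norm_nonneg v)
    rw [inner_sub_left] at h5
    nlinarith
  have := hmono (Set.left_mem_Icc.mpr zero_le_one) (Set.right_mem_Icc.mpr zero_le_one)
    zero_le_one
  simp only [hφ, one_smul, zero_smul, add_zero, one_pow, one_mul, zero_mul, zero_pow,
    mul_zero, sub_zero] at this
  linarith

set_option maxHeartbeats 1600000 in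
/-- descent estimate for one step of the inexact forward–backward algorithm.
Under the standing assumptions, if `2/α > ρ + L_g`, `f(x₀)` is finite and `x₁` is an
`ε`-minimizer of `z ↦ f z + (1/(2α))‖z − (x₀ − α∇g(x₀))‖²`, then
`(f+g)(x₀) − (f+g)(x₁) ≥ (1/α − ρ/2 − L_g/2)‖x₀−x₁‖² − ε − √(2ε/α)‖x₀−x₁‖`;
in particular, if `ε = 0` and `x₁ ≠ x₀`, the objective value strictly decreases. -/
theorem stmt_8 {X : Type*} [NormedAddCommGroup X] [InnerProductSpace ℝ X] [CompleteSpace X]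
    (f : X → EReal) (g : X → ℝ) (g' : X → X) (ρ Lg : ℝ) (hρ : 0 ≤ ρ)
    (hf_proper : (∃ x, f x ≠ ⊤) ∧ ∀ x, f x ≠ ⊥)
    (hf_lsc : LowerSemicontinuous f)
    (hf_wc : ∀ x y : X, ∀ l : ℝ, 0 ≤ l → l ≤ 1 →
      f (l • x + (1 - l) • y) ≤ ((l : ℝ) : EReal) * f x + ((1 - l : ℝ) : EReal) * f y +
        ((l * (1 - l) * (ρ / 2) * ‖x - y‖ ^ 2 : ℝ) : EReal))
    (hf_bdd : ∃ m : ℝ, ∀ x, ((m : ℝ) : EReal) ≤ f x)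
    (hg_conv : ConvexOn ℝ Set.univ g)
    (hg_diff : ∀ x, HasGradientAt g (g' x) x)
    (hg_lip : ∀ x y, ‖g' x - g' y‖ ≤ Lg * ‖x - y‖)
    (hS : {x : X | ∀ y : X, f x + ((g x : ℝ) : EReal) ≤ f y + ((g y : ℝ) : EReal)}.Nonempty)
    (α ε : ℝ) (hα : 0 < α) (hstep : ρ + Lg < 2 / α) (hε : 0 ≤ ε)
    (x₀ x₁ : X) (hfin : f x₀ ≠ ⊤)
    (hx₁ : ∀ z : X,
      f x₁ + ((1 / (2 * α) * ‖x₁ - (x₀ - α • g' x₀)‖ ^ 2 : ℝ) : EReal) ≤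
      f z + ((1 / (2 * α) * ‖z - (x₀ - α • g' x₀)‖ ^ 2 + ε : ℝ) : EReal)) :
    (f x₁ + ((g x₁ + (1 / α - ρ / 2 - Lg / 2) * ‖x₀ - x₁‖ ^ 2 - ε
        - Real.sqrt (2 * ε / α) * ‖x₀ - x₁‖ : ℝ) : EReal)
      ≤ f x₀ + ((g x₀ : ℝ) : EReal)) ∧
    (ε = 0 → x₁ ≠ x₀ →
      f x₁ + ((g x₁ : ℝ) : EReal) < f x₀ + ((g x₀ : ℝ) : EReal)) := by
  have hαne : (α : ℝ) ≠ 0 := ne_of_gt hα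
  set y : X := x₀ - α • g' x₀ with hy
  -- f x₀ and f x₁ are finite reals
  have hF₀ : ((f x₀).toReal : EReal) = f x₀ := EReal.coe_toReal hfin (hf_proper.2 x₀)
  set F₀ : ℝ := (f x₀).toReal with hF₀def
  have hfin₁ : f x₁ ≠ ⊤ := by
    intro h
    have h10 := hx₁ x₀
    rw [h, ← hF₀] at h10
    rw [EReal.top_add_coe, ← EReal.coe_add] at h10
    exact (EReal.coe_lt_top _).not_ge h10
  have hF₁ : ((f x₁).toReal : EReal) = f x₁ := EReal.coe_toReal hfin₁ (hf_proper.2 x₁)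
  set F₁ : ℝ := (f x₁).toReal with hF₁def
  -- descent lemma for g
  have hdesc : g x₁ ≤ g x₀ + ⟪x₁ - x₀, g' x₀⟫ + Lg / 2 * ‖x₀ - x₁‖ ^ 2 := by
    have h := descent_aux' g g' Lg hg_diff hg_lip x₀ (x₁ - x₀)
    rw [show x₀ + (x₁ - x₀) = x₁ from by abel, real_inner_comm, norm_sub_rev] at h
    exact h
  -- expansion of the proximal quadratic
  have hexp2 : 1 / (2 * α) * ‖x₁ - y‖ ^ 2
      = 1 / (2 * α) * ‖x₀ - y‖ ^ 2 + 1 / (2 * α) * ‖x₀ - x₁‖ ^ 2 + ⟪x₁ - x₀, g' x₀⟫ := by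
    have h1 : x₁ - y = (x₁ - x₀) + α • g' x₀ := by rw [hy]; abel
    have h2 : x₀ - y = α • g' x₀ := by rw [hy]; abel
    rw [h1, h2, norm_add_sq_real, real_inner_smul_right, norm_sub_rev x₁ x₀]
    field_simp
    ring
  -- the convexity interpolation identity for norms
  have hkey : ∀ l : ℝ, ‖(l • x₀ + (1 - l) • x₁) - y‖ ^ 2
      = l * ‖x₀ - y‖ ^ 2 + (1 - l) * ‖x₁ - y‖ ^ 2 - l * (1 - l) * ‖x₀ - x₁‖ ^ 2 := by
    intro l
    have h1 : (l • x₀ + (1 - l) • x₁) - y = l • (x₀ - y) + (1 - l) • (x₁ - y) := by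
      module
    have h2 : x₀ - x₁ = (x₀ - y) - (x₁ - y) := by abel
    rw [h1, h2, ← real_inner_self_eq_norm_sq, ← real_inner_self_eq_norm_sq,
      ← real_inner_self_eq_norm_sq, ← real_inner_self_eq_norm_sq]
    simp only [inner_add_left, inner_add_right, inner_sub_left, inner_sub_right,
      real_inner_smul_left, real_inner_smul_right]
    simp only [real_inner_comm y x₀, real_inner_comm y x₁, real_inner_comm x₁ x₀]
    ring
  -- the key per-l estimate
  have hP : ∀ l : ℝ, 0 < l → l ≤ 1 →
      F₁ + g x₁ + (1 / (2 * α) - Lg / 2) * ‖x₀ - x₁‖ ^ 2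
        + (1 - l) * (1 / (2 * α) - ρ / 2) * ‖x₀ - x₁‖ ^ 2
      ≤ F₀ + g x₀ + ε / l := by
    intro l hl0 hl1
    have hb := hx₁ (l • x₀ + (1 - l) • x₁)
    have hwc := hf_wc x₀ x₁ l hl0.le hl1
    rw [← hF₀, ← hF₁] at hwc
    have hwc' : f (l • x₀ + (1 - l) • x₁)
        ≤ ((l * F₀ + (1 - l) * F₁ + l * (1 - l) * (ρ / 2) * ‖x₀ - x₁‖ ^ 2 : ℝ) : EReal) := by
      exact_mod_cast hwc
    have hchain := le_trans hb (add_le_add_left hwc' _)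
    rw [← hF₁] at hchain
    have hreal : F₁ + 1 / (2 * α) * ‖x₁ - y‖ ^ 2
        ≤ (l * F₀ + (1 - l) * F₁ + l * (1 - l) * (ρ / 2) * ‖x₀ - x₁‖ ^ 2)
          + (1 / (2 * α) * ‖(l • x₀ + (1 - l) • x₁) - y‖ ^ 2 + ε) := by
      exact_mod_cast hchain
    rw [hkey l] at hreal
    -- divide by l
    have hmul : l * (F₁ + 1 / (2 * α) * ‖x₁ - y‖ ^ 2
        + (1 - l) * (1 / (2 * α) - ρ / 2) * ‖x₀ - x₁‖ ^ 2)
        ≤ l * (F₀ + 1 / (2 * α) * ‖x₀ - y‖ ^ 2) + ε := by nlinarith [hreal]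
    have hA : F₁ + 1 / (2 * α) * ‖x₁ - y‖ ^ 2
        + (1 - l) * (1 / (2 * α) - ρ / 2) * ‖x₀ - x₁‖ ^ 2
        ≤ F₀ + 1 / (2 * α) * ‖x₀ - y‖ ^ 2 + ε / l := by
      have h3 : F₁ + 1 / (2 * α) * ‖x₁ - y‖ ^ 2
          + (1 - l) * (1 / (2 * α) - ρ / 2) * ‖x₀ - x₁‖ ^ 2
          ≤ (l * (F₀ + 1 / (2 * α) * ‖x₀ - y‖ ^ 2) + ε) / l := by
        rw [le_div_iff₀ hl0]
        nlinarith [hmul]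
      have h4 : (l * (F₀ + 1 / (2 * α) * ‖x₀ - y‖ ^ 2) + ε) / l
          = F₀ + 1 / (2 * α) * ‖x₀ - y‖ ^ 2 + ε / l := by
        have hlne : l ≠ 0 := ne_of_gt hl0
        field_simp
      linarith [h3, h4.le, h4.ge]
    linarith [hA, hexp2, hdesc]
  -- the main real inequality
  have hmain : F₁ + g x₁ + (1 / α - ρ / 2 - Lg / 2) * ‖x₀ - x₁‖ ^ 2 - ε
      - Real.sqrt (2 * ε / α) * ‖x₀ - x₁‖ ≤ F₀ + g x₀ := by
    have hsplit : (1 / α - ρ / 2 - Lg / 2 : ℝ)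
        = (1 / (2 * α) - Lg / 2) + (1 / (2 * α) - ρ / 2) := by field_simp; ring
    have hsS0 : (0:ℝ) ≤ Real.sqrt (2 * ε / α) := Real.sqrt_nonneg _
    have hsS2 : Real.sqrt (2 * ε / α) ^ 2 = 2 * ε / α :=
      Real.sq_sqrt (by positivity)
    have hD0 : (0:ℝ) ≤ ‖x₀ - x₁‖ := norm_nonneg _
    have hsSD : 0 ≤ Real.sqrt (2 * ε / α) * ‖x₀ - x₁‖ := mul_nonneg hsS0 hD0
    rw [hsplit]
    rcases le_or_gt (1 / (2 * α) - ρ / 2) 0 with hcase | hcase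
    · have hP1 := hP 1 one_pos le_rfl
      have hc1 : (1 / (2 * α) - ρ / 2) * ‖x₀ - x₁‖ ^ 2 ≤ 0 :=
        mul_nonpos_of_nonpos_of_nonneg hcase (sq_nonneg _)
      have : ε / 1 = ε := div_one ε
      nlinarith [hP1]
    · rcases eq_or_lt_of_le hD0 with hD | hD
      · have hP1 := hP 1 one_pos le_rfl
        have hd2 : ‖x₀ - x₁‖ = 0 := hD.symm
        rw [hd2] at hP1 ⊢
        have hεd : ε / 1 = ε := div_one ε
        nlinarith [hP1]
      · rcases eq_or_lt_of_le hε with hε0 | hε0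
        · -- ε = 0 : limit argument
          apply le_of_forall_sub_le
          intro η hη
          have hcd : 0 < (1 / (2 * α) - ρ / 2) * ‖x₀ - x₁‖ ^ 2 :=
            mul_pos hcase (by positivity)
          set l : ℝ := min 1 (η / ((1 / (2 * α) - ρ / 2) * ‖x₀ - x₁‖ ^ 2)) with hl
          have hl0 : 0 < l := lt_min one_pos (div_pos hη hcd)
          have hPl := hP l hl0 (min_le_left _ _)
          have hlc : l * ((1 / (2 * α) - ρ / 2) * ‖x₀ - x₁‖ ^ 2) ≤ η := by
            calc l * ((1 / (2 * α) - ρ / 2) * ‖x₀ - x₁‖ ^ 2)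
                ≤ (η / ((1 / (2 * α) - ρ / 2) * ‖x₀ - x₁‖ ^ 2))
                  * ((1 / (2 * α) - ρ / 2) * ‖x₀ - x₁‖ ^ 2) :=
                  mul_le_mul_of_nonneg_right (min_le_right _ _) hcd.le
              _ = η := div_mul_cancel₀ _ (ne_of_gt hcd)
          have hεl : ε / l = 0 := by rw [← hε0, zero_div]
          rw [hεl] at hPl
          nlinarith [hPl, hlc, hsSD]
        · -- ε > 0
          set sc : ℝ := Real.sqrt (1 / (2 * α) - ρ / 2) with hsc
          set sε : ℝ := Real.sqrt ε with hsε
          have hsc2 : sc ^ 2 = 1 / (2 * α) - ρ / 2 := Real.sq_sqrt hcase.le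
          have hsε2 : sε ^ 2 = ε := Real.sq_sqrt hε0.le
          have hsc0 : 0 < sc := Real.sqrt_pos.mpr hcase
          have hsε0 : 0 < sε := Real.sqrt_pos.mpr hε0
          have hscsε : sε * sc ≤ Real.sqrt (2 * ε / α) := by
            apply sqrt_dominate' (by positivity) hsS0
            rw [hsS2, mul_pow, hsc2, hsε2]
            have h10 : 0 ≤ ε * ρ := mul_nonneg hε0.le hρ
            have h11 : 0 ≤ ε * (1 / α) := by positivity
            have h12 : 2 * ε / α = 2 * (ε * (1 / α)) := by ring
            have h13 : ε * (1 / (2 * α) - ρ / 2) = (ε * (1 / α)) / 2 - (ε * ρ) / 2 := by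
              ring
            linarith
          rcases le_or_gt (sε / (sc * ‖x₀ - x₁‖)) 1 with h1 | h1
          · set l : ℝ := sε / (sc * ‖x₀ - x₁‖) with hl
            have hl0 : 0 < l := div_pos hsε0 (mul_pos hsc0 hD)
            have hPl := hP l hl0 h1
            have e1 : l * ((1 / (2 * α) - ρ / 2) * ‖x₀ - x₁‖ ^ 2)
                = sε * sc * ‖x₀ - x₁‖ := by
              rw [hl, ← hsc2]
              field_simp
            have e2 : ε / l = sε * sc * ‖x₀ - x₁‖ := by
              rw [hl, ← hsε2]
              field_simp
            rw [e2] at hPl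
            have e3 : 2 * (sε * sc) ≤ Real.sqrt (2 * ε / α) := by
              apply sqrt_dominate' (by positivity) hsS0
              rw [hsS2]
              have expand : (2 * (sε * sc)) ^ 2 = 4 * sε ^ 2 * sc ^ 2 := by ring
              rw [expand, hsc2, hsε2]
              have h10 : 0 ≤ ε * ρ := mul_nonneg hε0.le hρ
              have h11 : 0 ≤ ε * (1 / α) := by positivity
              have h12 : 2 * ε / α = 2 * (ε * (1 / α)) := by ring
              have h13 : 4 * ε * (1 / (2 * α) - ρ / 2) = 2 * (ε * (1 / α)) - 2 * (ε * ρ) := by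
                ring
              linarith
            have e3D : 2 * (sε * sc) * ‖x₀ - x₁‖ ≤ Real.sqrt (2 * ε / α) * ‖x₀ - x₁‖ :=
              mul_le_mul_of_nonneg_right e3 hD0
            nlinarith [hPl, e1, e3D, hε0.le]
          · -- l₀ > 1, use l = 1
            have hP1 := hP 1 one_pos le_rfl
            have hscD : sc * ‖x₀ - x₁‖ < sε := by
              rw [lt_div_iff₀ (mul_pos hsc0 hD)] at h1
              linarith [h1]
            have hprod0 : (0:ℝ) ≤ sc * ‖x₀ - x₁‖ := (mul_pos hsc0 hD).le
            have fact1 : (sc * ‖x₀ - x₁‖) * (sc * ‖x₀ - x₁‖) ≤ (sc * ‖x₀ - x₁‖) * sε :=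
              mul_le_mul_of_nonneg_left hscD.le hprod0
            have fact2 : (sc * ‖x₀ - x₁‖) * sε < sε * sε :=
              (mul_lt_mul_of_pos_right hscD hsε0)
            have hcd : (1 / (2 * α) - ρ / 2) * ‖x₀ - x₁‖ ^ 2 < ε := by
              rw [← hsc2, ← hsε2]
              nlinarith [fact1, fact2]
            have hεd : ε / 1 = ε := div_one ε
            have hcd2 : (1 / (2 * α) - ρ / 2) * ‖x₀ - x₁‖ ^ 2 ≤ Real.sqrt (2 * ε / α) * ‖x₀ - x₁‖ := by
              have h11 : sε * (sc * ‖x₀ - x₁‖) ≤ Real.sqrt (2 * ε / α) * ‖x₀ - x₁‖ := by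
                have := mul_le_mul_of_nonneg_right hscsε hD0
                nlinarith [this]
              rw [← hsc2]
              nlinarith [fact1, h11]
            nlinarith [hP1, hcd, hcd2]
  constructor
  · rw [← hF₀, ← hF₁, ← EReal.coe_add, ← EReal.coe_add, EReal.coe_le_coe_iff]
    linarith [hmain]
  · intro hε0 hne
    rw [← hF₀, ← hF₁, ← EReal.coe_add, ← EReal.coe_add, EReal.coe_lt_coe_iff]
    have hK : 0 < 1 / α - ρ / 2 - Lg / 2 := by
      have h2α : 2 / α = 2 * (1 / α) := by ring
      rw [h2α] at hstep
      linarith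
    have hD0 : 0 < ‖x₀ - x₁‖ := norm_pos_iff.mpr (sub_ne_zero_of_ne fun h => hne h.symm)
    subst hε0
    rw [show (2 * 0 / α : ℝ) = 0 by ring, Real.sqrt_zero] at hmain
    nlinarith [hmain, mul_pos hK (pow_pos hD0 2)]
end

section
/- Assume the standing assumptions on f and g, that f+g satisfies the global sharpness condition with constant μ > 0, and that ε and α satisfy the parameter assumption, with E⁻ and E⁺ defined accordingly. Let (x_t) be an inexact forward–backward sequence with constant step size α and accuracy ε. If there exists t₀ ∈ ℕ with E⁻ < dist(x_{t₀},S) < E⁺, then there exists a constant ζ > 1 such that for all t ≥ t₀: dist²(x_t,S) − (E⁻)² ≤ (1/ζ)^{t−t₀}·(dist²(x_{t₀},S) − (E⁻)²). Consequently, limsup_{t→∞} dist(x_t,S) ≤ E⁻. -/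
set_option maxHeartbeats 4000000
open Metric Filter Topology
open scoped RealInnerProductSpace

section helpers
variable {X : Type*} [NormedAddCommGroup X] [InnerProductSpace ℝ X] [CompleteSpace X]

lemma aux_ne_top {a : EReal} {c d : ℝ} (h : a + (c : EReal) ≤ (d : EReal)) : a ≠ ⊤ := by
  intro ha
  rw [ha, EReal.top_add_coe] at h
  exact (EReal.coe_lt_top d).not_ge h

lemma curve_hasDerivAt (g : X → ℝ) (g' : X → X)
    (hg_diff : ∀ x, HasGradientAt g (g' x) x) (u v : X) (t : ℝ) :
    HasDerivAt (fun τ : ℝ => g (u + τ • v)) ⟪g' (u + t • v), v⟫ t := by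
  have h1 : HasDerivAt (fun τ : ℝ => u + τ • v) v t := by
    simpa using ((hasDerivAt_id t).smul_const v).const_add u
  have h2 := (hg_diff (u + t • v)).hasFDerivAt.comp_hasDerivAt t h1
  simp [InnerProductSpace.toDual_apply_apply] at h2; exact h2

lemma grad_ineq_of_convex (g : X → ℝ) (g' : X → X)
    (hg_conv : ConvexOn ℝ Set.univ g)
    (hg_diff : ∀ x, HasGradientAt g (g' x) x) (u w : X) :
    g u + ⟪g' u, w - u⟫ ≤ g w := by
  set φ : ℝ → ℝ := fun τ => g (u + τ • (w - u)) with hφ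
  have hder : HasDerivAt φ ⟪g' u, w - u⟫ 0 := by
    simpa using curve_hasDerivAt g g' hg_diff u (w - u) 0
  have hslope := hasDerivAt_iff_tendsto_slope.mp hder
  have h2 : Tendsto (slope φ 0) (𝓝[>] 0) (𝓝 ⟪g' u, w - u⟫) :=
    hslope.mono_left (nhdsWithin_mono 0 (fun y hy => ne_of_gt hy))
  have hbound : ∀ᶠ t in 𝓝[>] (0:ℝ), slope φ 0 t ≤ g w - g u := by
    filter_upwards [Ioo_mem_nhdsGT_of_mem (Set.mem_Ico.2 ⟨le_refl (0:ℝ), zero_lt_one⟩)]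
      with t ht
    have hconv := hg_conv.2 (Set.mem_univ u) (Set.mem_univ w)
      (by linarith [ht.2] : (0:ℝ) ≤ 1 - t) (le_of_lt ht.1) (by ring)
    have hpt : (1 - t) • u + t • w = u + t • (w - u) := by module
    rw [hpt] at hconv
    have hsl : slope φ 0 t = (φ t - φ 0) / t := by
      rw [slope_def_field]; simp
    rw [hsl, div_le_iff₀ ht.1]
    have hφ0 : φ 0 = g u := by simp [hφ]
    rw [hφ0]
    have hc : φ t ≤ (1 - t) * g u + t * g w := hconv
    nlinarith [hc]
  have := le_of_tendsto h2 hbound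
  linarith

lemma descent_lemma (g : X → ℝ) (g' : X → X) (Lg : ℝ) (hLg : 0 ≤ Lg)
    (hg_diff : ∀ x, HasGradientAt g (g' x) x)
    (hg_lip : ∀ x y, ‖g' x - g' y‖ ≤ Lg * ‖x - y‖) (u w : X) :
    g w ≤ g u + ⟪g' u, w - u⟫ + Lg / 2 * ‖w - u‖ ^ 2 := by
  set v := w - u with hv
  have hgc : Continuous g' := by
    have : LipschitzWith (Real.toNNReal Lg) g' := by
      apply LipschitzWith.of_dist_le_mul
      intro a b
      rw [dist_eq_norm, dist_eq_norm, Real.coe_toNNReal _ hLg]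
      exact hg_lip a b
    exact this.continuous
  have hcont : Continuous fun t : ℝ => ⟪g' (u + t • v), v⟫ :=
    (Continuous.inner (hgc.comp (continuous_const.add
      ((continuous_id.smul continuous_const)))) continuous_const)
  have hInt : IntervalIntegrable (fun t : ℝ => ⟪g' (u + t • v), v⟫)
      MeasureTheory.volume 0 1 := hcont.intervalIntegrable 0 1
  have heq : ∫ t in (0:ℝ)..1, ⟪g' (u + t • v), v⟫ = g (u + (1:ℝ) • v) - g (u + (0:ℝ) • v) :=
    intervalIntegral.integral_eq_sub_of_hasDerivAt
      (fun t _ => curve_hasDerivAt g g' hg_diff u v t) hInt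
  have heq2 : ∫ t in (0:ℝ)..1, ⟪g' (u + t • v), v⟫ = g w - g u := by
    rw [heq]; simp [hv]
  have hcont2 : Continuous fun t : ℝ => ⟪g' u, v⟫ + Lg * ‖v‖ ^ 2 * t := by continuity
  have hmono : ∫ t in (0:ℝ)..1, ⟪g' (u + t • v), v⟫
      ≤ ∫ t in (0:ℝ)..1, (⟪g' u, v⟫ + Lg * ‖v‖ ^ 2 * t) := by
    apply intervalIntegral.integral_mono_on (by norm_num) hInt
      (hcont2.intervalIntegrable 0 1)
    intro t ht
    have hlip := hg_lip (u + t • v) u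
    have hip : ⟪g' (u + t • v) - g' u, v⟫ ≤ ‖g' (u + t • v) - g' u‖ * ‖v‖ :=
      real_inner_le_norm _ _
    have hnorm : ‖u + t • v - u‖ = t * ‖v‖ := by
      rw [show u + t • v - u = t • v by abel, norm_smul, Real.norm_eq_abs,
        abs_of_nonneg ht.1]
    have hsplit : ⟪g' (u + t • v), v⟫ = ⟪g' u, v⟫ + ⟪g' (u + t • v) - g' u, v⟫ := by
      rw [inner_sub_left]; ring
    rw [hsplit]
    have h1 : ‖g' (u + t • v) - g' u‖ * ‖v‖ ≤ Lg * (t * ‖v‖) * ‖v‖ := by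
      apply mul_le_mul_of_nonneg_right _ (norm_nonneg v)
      rw [← hnorm]; exact hlip
    nlinarith [norm_nonneg v]
  have hval : ∫ t in (0:ℝ)..1, (⟪g' u, v⟫ + Lg * ‖v‖ ^ 2 * t)
      = ⟪g' u, v⟫ + Lg * ‖v‖ ^ 2 / 2 := by
    rw [intervalIntegral.integral_add (intervalIntegrable_const)
      (Continuous.intervalIntegrable (by continuity) 0 1),
      intervalIntegral.integral_const_mul, integral_id]
    simp; ring
  rw [heq2, hval] at hmono
  rw [hv]
  linarith

end helpers

/-- Theorem 6.1, first part: under the standing assumptions, global sharpness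
of `f+g` with constant `μ > 0`, and the parameter assumptions on `ε` and `α`, for an inexact
forward–backward sequence: if `E⁻ < dist(x_{t₀},S) < E⁺` for some `t₀`, then there is
`ζ > 1` with `dist²(x_t,S) − (E⁻)² ≤ (1/ζ)^{t−t₀}(dist²(x_{t₀},S) − (E⁻)²)` for all
`t ≥ t₀`; consequently `limsup_{t→∞} dist(x_t,S) ≤ E⁻`. -/
theorem stmt_11 {X : Type*} [NormedAddCommGroup X] [InnerProductSpace ℝ X] [CompleteSpace X]
    (f : X → EReal) (g : X → ℝ) (g' : X → X) (ρ Lg : ℝ) (hρ : 0 ≤ ρ)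
    (hf_proper : (∃ x, f x ≠ ⊤) ∧ ∀ x, f x ≠ ⊥)
    (hf_lsc : LowerSemicontinuous f)
    (hf_wc : ∀ x y : X, ∀ l : ℝ, 0 ≤ l → l ≤ 1 →
      f (l • x + (1 - l) • y) ≤ ((l : ℝ) : EReal) * f x + ((1 - l : ℝ) : EReal) * f y +
        ((l * (1 - l) * (ρ / 2) * ‖x - y‖ ^ 2 : ℝ) : EReal))
    (hf_bdd : ∃ m : ℝ, ∀ x, ((m : ℝ) : EReal) ≤ f x)
    (hg_conv : ConvexOn ℝ Set.univ g)
    (hg_diff : ∀ x, HasGradientAt g (g' x) x)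
    (hg_lip : ∀ x y, ‖g' x - g' y‖ ≤ Lg * ‖x - y‖)
    (S : Set X)
    (hS : S = {x : X | ∀ y : X, f x + ((g x : ℝ) : EReal) ≤ f y + ((g y : ℝ) : EReal)})
    (hSne : S.Nonempty)
    (μ : ℝ) (hμ : 0 < μ)
    (hsharp : ∀ x : X,
      sInf (Set.range fun y : X => f y + ((g y : ℝ) : EReal)) +
          ((μ * Metric.infDist x S : ℝ) : EReal) ≤ f x + ((g x : ℝ) : EReal))
    (α ε : ℝ) (hα : 0 < α) (hε0 : 0 ≤ ε)
    (hεlt : ε < μ ^ 2 / (2 * (ρ + 1)) * min (1 / (Lg + 1)) (1 / (ρ + 2)))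
    (hαlb : 2 * ε * (ρ + 1) / (μ ^ 2 - 2 * ε * (ρ + 1)) ≤ α)
    (hαub : α < min (1 / Lg) (1 / (ρ + 1)))
    (Em Ep : ℝ)
    (hEm : Em = (μ - Real.sqrt (μ ^ 2 - 2 * ε * (ρ + 1) * (α + 1) / α)) / (ρ + 1))
    (hEp : Ep = (μ + Real.sqrt (μ ^ 2 - 2 * ε * (ρ + 1) * (α + 1) / α)) / (ρ + 1))
    (x : ℕ → X)
    (hseq : ∀ t : ℕ, ∀ z : X,
      f (x (t + 1)) +
          ((1 / (2 * α) * ‖x (t + 1) - (x t - α • g' (x t))‖ ^ 2 : ℝ) : EReal) ≤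
        f z + ((1 / (2 * α) * ‖z - (x t - α • g' (x t))‖ ^ 2 + ε : ℝ) : EReal))
    (t₀ : ℕ) (h₀ : Em < Metric.infDist (x t₀) S) (h₀' : Metric.infDist (x t₀) S < Ep) :
    (∃ ζ : ℝ, 1 < ζ ∧ ∀ t ≥ t₀,
      (Metric.infDist (x t) S) ^ 2 - Em ^ 2 ≤
        (1 / ζ) ^ (t - t₀) * ((Metric.infDist (x t₀) S) ^ 2 - Em ^ 2)) ∧
    Filter.limsup (fun t : ℕ => Metric.infDist (x t) S) Filter.atTop ≤ Em := by
  -- basic positivity facts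
  have hρ1 : (0:ℝ) < ρ + 1 := by linarith only [hρ]
  have hαub1 : α < 1 / Lg := lt_of_lt_of_le hαub (min_le_left _ _)
  have hαub2 : α < 1 / (ρ + 1) := lt_of_lt_of_le hαub (min_le_right _ _)
  have hc₁ : 0 < 1 - α * (ρ + 1) := by
    have h := (lt_div_iff₀ hρ1).mp hαub2; linarith only [h]
  have hLgpos : 0 < Lg := by
    by_contra hcon; push_neg at hcon
    have h1 : 1 / Lg ≤ 0 := by
      rcases hcon.lt_or_eq with h | h
      · exact le_of_lt (one_div_neg.mpr h)
      · rw [h]; norm_num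
    linarith only [h1, hαub1, hα]
  have hαLg : α * Lg < 1 := (lt_div_iff₀ hLgpos).mp hαub1
  -- discriminant
  have hμ2 : 2 * ε * (ρ + 1) < μ ^ 2 := by
    have hminle : min (1 / (Lg + 1)) (1 / (ρ + 2)) ≤ 1 :=
      le_trans (min_le_right _ _) (by rw [div_le_one (by linarith only [hρ])]; linarith only [hρ])
    have h1 : ε < μ ^ 2 / (2 * (ρ + 1)) := by
      have h2 : μ ^ 2 / (2 * (ρ + 1)) * min (1 / (Lg + 1)) (1 / (ρ + 2))
          ≤ μ ^ 2 / (2 * (ρ + 1)) * 1 :=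
        mul_le_mul_of_nonneg_left hminle (by positivity)
      rw [mul_one] at h2; linarith only [h2, hεlt]
    rw [lt_div_iff₀ (by linarith only [hρ] : (0:ℝ) < 2 * (ρ + 1))] at h1
    linarith only [h1]
  have h7 : 2 * ε * (ρ + 1) ≤ α * (μ ^ 2 - 2 * ε * (ρ + 1)) := by
    have h := (div_le_iff₀ (by linarith only [hμ2] : (0:ℝ) < μ ^ 2 - 2 * ε * (ρ + 1))).mp hαlb
    linarith only [h]
  have hdisc : 0 ≤ μ ^ 2 - 2 * ε * (ρ + 1) * (α + 1) / α := by
    rw [sub_nonneg, div_le_iff₀ hα]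
    linarith only [h7]
  set Δ := Real.sqrt (μ ^ 2 - 2 * ε * (ρ + 1) * (α + 1) / α) with hΔdef
  have hΔsq : Δ ^ 2 = μ ^ 2 - 2 * ε * (ρ + 1) * (α + 1) / α := Real.sq_sqrt hdisc
  have hΔsq' : α * Δ ^ 2 = α * μ ^ 2 - 2 * ε * (ρ + 1) * (α + 1) := by
    rw [hΔsq]; field_simp
  have hΔ0 : 0 ≤ Δ := Real.sqrt_nonneg _
  have hterm : 0 ≤ 2 * ε * (ρ + 1) * (α + 1) / α := by positivity
  have hΔμ : Δ ≤ μ := by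
    have hsq : Δ ^ 2 ≤ μ ^ 2 := by linarith only [hΔsq, hterm]
    nlinarith only [hsq, hΔ0, hμ]
  have hEm' : (ρ + 1) * Em = μ - Δ := by rw [hEm]; field_simp
  have hEp' : (ρ + 1) * Ep = μ + Δ := by rw [hEp]; field_simp
  have hEm0 : 0 ≤ Em := by
    rw [hEm]; exact div_nonneg (by linarith only [hΔμ]) (by linarith only [hρ])
  -- the one-step ("master") inequality
  have key : ∀ t : ℕ,
      2 * α * μ * infDist (x (t + 1)) S
        + (1 - α * (ρ + 1)) * (infDist (x (t + 1)) S) ^ 2 - 2 * ε * (α + 1)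
      ≤ (infDist (x t) S) ^ 2 := by
    intro t
    have hδb : ∀ δ : ℝ, 0 < δ →
        2 * α * μ * infDist (x (t + 1)) S
          + (1 - α * (ρ + 1)) * (infDist (x (t + 1)) S) ^ 2 - 2 * ε * (α + 1)
        ≤ (infDist (x t) S + δ) ^ 2 := by
      intro δ hδpos
      obtain ⟨s, hsS, hdist⟩ := (Metric.infDist_lt_iff hSne).mp
        (lt_add_of_pos_right (infDist (x t) S) hδpos)
      have hsS' : ∀ y : X, f s + ((g s : ℝ) : EReal) ≤ f y + ((g y : ℝ) : EReal) := by
        rw [hS] at hsS; exact hsS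
      obtain ⟨x₀, hx₀⟩ := hf_proper.1
      -- f s is finite
      have hfsne : f s ≠ ⊤ := by
        intro htop
        have h00 := hsS' x₀
        rw [htop, EReal.top_add_coe] at h00
        exact (EReal.add_lt_top hx₀ (EReal.coe_ne_top _)).not_ge h00
      set B := (f s).toReal with hBdef
      have hBeq : f s = ((B : ℝ) : EReal) := (EReal.coe_toReal hfsne (hf_proper.2 s)).symm
      -- f (x (t+1)) is finite
      have hfvne : f (x (t + 1)) ≠ ⊤ := by
        have h0 := hseq t s
        rw [hBeq] at h0
        exact aux_ne_top (h0.trans_eq (EReal.coe_add B _).symm)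
      set A := (f (x (t + 1))).toReal with hAdef
      have hAeq : f (x (t + 1)) = ((A : ℝ) : EReal) :=
        (EReal.coe_toReal hfvne (hf_proper.2 _)).symm
      -- the auxiliary convex-combination point
      obtain ⟨l, hl0, hl1, hlα⟩ : ∃ l : ℝ, 0 < l ∧ l < 1 ∧ l * (α + 1) = α :=
        ⟨α / (α + 1), by positivity, by rw [div_lt_one (by linarith only [hα])]; linarith only [hα],
          by field_simp⟩
      have h2e := hf_wc s (x (t + 1)) l hl0.le hl1.le
      rw [hBeq, hAeq] at h2e
      have hfzle : f (l • s + (1 - l) • x (t + 1))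
          ≤ (((l * B + (1 - l) * A + l * (1 - l) * (ρ / 2) * ‖s - x (t + 1)‖ ^ 2) : ℝ) : EReal) := by
        refine h2e.trans_eq ?_
        norm_cast
      have hfzne : f (l • s + (1 - l) • x (t + 1)) ≠ ⊤ :=
        ne_top_of_le_ne_top (EReal.coe_ne_top _) hfzle
      set C := (f (l • s + (1 - l) • x (t + 1))).toReal with hCdef
      have hCeq : f (l • s + (1 - l) • x (t + 1)) = ((C : ℝ) : EReal) :=
        (EReal.coe_toReal hfzne (hf_proper.2 _)).symm
      -- real versions of the inequalities
      have h2r : C ≤ l * B + (1 - l) * A + l * (1 - l) * (ρ / 2) * ‖s - x (t + 1)‖ ^ 2 := by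
        rw [hCeq] at hfzle; exact_mod_cast hfzle
      have h1 := hseq t (l • s + (1 - l) • x (t + 1))
      rw [hAeq, hCeq] at h1
      have h1r : A + 1 / (2 * α) * ‖x (t + 1) - (x t - α • g' (x t))‖ ^ 2
          ≤ C + (1 / (2 * α) * ‖l • s + (1 - l) • x (t + 1) - (x t - α • g' (x t))‖ ^ 2 + ε) := by
        exact_mod_cast h1
      -- sharpness
      have hinf : sInf (Set.range fun y : X => f y + ((g y : ℝ) : EReal))
          = f s + ((g s : ℝ) : EReal) :=
        le_antisymm (sInf_le ⟨s, rfl⟩) (le_sInf (by rintro b ⟨y, rfl⟩; exact hsS' y))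
      have h5 := hsharp (x (t + 1))
      rw [hinf, hBeq, hAeq] at h5
      have h5r : B + g s + μ * infDist (x (t + 1)) S ≤ A + g (x (t + 1)) := by
        exact_mod_cast h5
      -- abbreviations
      set u := x t with hu
      set v := x (t + 1) with hv
      set D := infDist v S with hD
      set dd := infDist u S with hdd
      -- norm expansion
      have n1 : ‖l • s + (1 - l) • v - (u - α • g' u)‖ ^ 2
          = ‖v - (u - α • g' u)‖ ^ 2 + 2 * l * ⟪v - (u - α • g' u), s - v⟫
            + l ^ 2 * ‖s - v‖ ^ 2 := by
        have hzp : l • s + (1 - l) • v - (u - α • g' u)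
            = (v - (u - α • g' u)) + l • (s - v) := by module
        rw [hzp, norm_add_sq_real, real_inner_smul_right, norm_smul, Real.norm_eq_abs,
          mul_pow, sq_abs]
        ring
      -- multiply h1r by 2α
      have e1 : ∀ r q : ℝ, 2 * α * (r + 1 / (2 * α) * q) = 2 * α * r + q := by
        intro r q; field_simp
      have e2 : ∀ r q : ℝ, 2 * α * (r + (1 / (2 * α) * q + ε)) = 2 * α * r + q + 2 * α * ε := by
        intro r q; field_simp; ring
      have h1c : 2 * α * A + ‖v - (u - α • g' u)‖ ^ 2
          ≤ 2 * α * C + ‖l • s + (1 - l) • v - (u - α • g' u)‖ ^ 2 + 2 * α * ε := by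
        have h := mul_le_mul_of_nonneg_left h1r (by linarith only [hα] : (0:ℝ) ≤ 2 * α)
        rw [e1, e2] at h
        exact h
      have h2c := mul_le_mul_of_nonneg_left h2r (by linarith only [hα] : (0:ℝ) ≤ 2 * α)
      have hS2nn : (0:ℝ) ≤ ‖s - v‖ ^ 2 := by positivity
      have hstar : 2 * α * (l * A) ≤ 2 * α * (l * B)
          + α * l * (1 - l) * ρ * ‖s - v‖ ^ 2 + 2 * l * ⟪v - (u - α • g' u), s - v⟫
          + l ^ 2 * ‖s - v‖ ^ 2 + 2 * α * ε := by
        linarith only [h1c, n1, h2c]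
      have hlle : l ≤ α := by
        linarith only [hlα, mul_pos hl0 hα]
      have hcoef : α * l * (1 - l) * ρ + l ^ 2 ≤ l * (α * (ρ + 1)) := by
        have haux : 0 ≤ α - l + α * l * ρ := by
          linarith only [hlle, mul_nonneg (mul_nonneg hα.le hl0.le) hρ]
        linarith only [mul_nonneg hl0.le haux]
      have he : 2 * l * (ε * (α + 1)) = 2 * α * ε := by linear_combination 2 * ε * hlα
      have hscaled : 2 * l * (α * A) ≤ 2 * l * (α * B + α * (ρ + 1) / 2 * ‖s - v‖ ^ 2
          + ⟪v - (u - α • g' u), s - v⟫ + ε * (α + 1)) := by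
        linarith only [hstar, mul_nonneg (sub_nonneg.2 hcoef) hS2nn, he]
      have hstep1 : α * A ≤ α * B + α * (ρ + 1) / 2 * ‖s - v‖ ^ 2
          + ⟪v - (u - α • g' u), s - v⟫ + ε * (α + 1) :=
        (mul_le_mul_iff_right₀ (by linarith only [hl0] : (0:ℝ) < 2 * l)).mp hscaled
      -- inner product expansions
      have hvp : v - (u - α • g' u) = (v - u) + α • g' u := by module
      have nIP : ⟪v - (u - α • g' u), s - v⟫ = ⟪v - u, s - v⟫ + α * ⟪g' u, s - v⟫ := by
        rw [hvp, inner_add_left, real_inner_smul_left]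
      have n3 : ‖s - u‖ ^ 2 = ‖v - u‖ ^ 2 + 2 * ⟪v - u, s - v⟫ + ‖s - v‖ ^ 2 := by
        rw [show s - u = (v - u) + (s - v) from by abel]
        exact norm_add_sq_real _ _
      have n4 : ⟪g' u, s - v⟫ + ⟪g' u, v - u⟫ = ⟪g' u, s - u⟫ := by
        rw [← inner_add_right, show (s - v) + (v - u) = s - u from by abel]
      -- g inequalities
      have r4 := descent_lemma g g' Lg hLgpos.le hg_diff hg_lip u v
      have r5 := grad_ineq_of_convex g g' hg_conv hg_diff u s
      have r4c := mul_le_mul_of_nonneg_left r4 (by linarith only [hα] : (0:ℝ) ≤ 2 * α)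
      have r5c := mul_le_mul_of_nonneg_left r5 (by linarith only [hα] : (0:ℝ) ≤ 2 * α)
      have r3c := mul_le_mul_of_nonneg_left h5r (by linarith only [hα] : (0:ℝ) ≤ 2 * α)
      -- distance facts
      have hD0 : 0 ≤ D := infDist_nonneg
      have hDle : D ≤ ‖s - v‖ := by
        rw [norm_sub_rev, ← dist_eq_norm]
        exact infDist_le_dist_of_mem hsS
      have hS2D : D ^ 2 ≤ ‖s - v‖ ^ 2 := pow_le_pow_left₀ hD0 hDle 2
      have hW2 : ‖s - u‖ ^ 2 ≤ (dd + δ) ^ 2 := by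
        have h1' : ‖s - u‖ = dist u s := by rw [dist_comm, dist_eq_norm]
        have h2' : ‖s - u‖ ≤ dd + δ := by rw [h1']; exact hdist.le
        exact pow_le_pow_left₀ (norm_nonneg _) h2' 2
      have p1 : 0 ≤ (1 - α * (ρ + 1)) * (‖s - v‖ ^ 2 - D ^ 2) :=
        mul_nonneg hc₁.le (by linarith only [hS2D])
      have p2 : 0 ≤ (1 - α * Lg) * ‖v - u‖ ^ 2 :=
        mul_nonneg (by linarith only [hαLg]) (by positivity)
      -- final combination, in small steps
      have c1 : 2 * α * A ≤ 2 * α * B + α * (ρ + 1) * ‖s - v‖ ^ 2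
          + 2 * ⟪v - (u - α • g' u), s - v⟫ + 2 * ε * (α + 1) := by
        linarith only [hstep1]
      have s1 : 2 * α * g s + 2 * α * (μ * D) ≤ α * (ρ + 1) * ‖s - v‖ ^ 2
          + 2 * ⟪v - (u - α • g' u), s - v⟫ + 2 * ε * (α + 1) + 2 * α * g v := by
        linarith only [c1, r3c]
      have s2 : 2 * α * g v ≤ 2 * α * g s - 2 * α * ⟪g' u, s - u⟫
          + 2 * α * ⟪g' u, v - u⟫ + α * Lg * ‖v - u‖ ^ 2 := by
        linarith only [r4c, r5c]
      have c2' : 2 * ⟪v - (u - α • g' u), s - v⟫ + 2 * α * ⟪g' u, v - u⟫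
          - 2 * α * ⟪g' u, s - u⟫
          = ‖s - u‖ ^ 2 - ‖v - u‖ ^ 2 - ‖s - v‖ ^ 2 := by
        linear_combination 2 * nIP - n3 + 2 * α * n4
      have s5 : 2 * α * (μ * D) ≤ α * (ρ + 1) * ‖s - v‖ ^ 2 + ‖s - u‖ ^ 2
          - ‖v - u‖ ^ 2 - ‖s - v‖ ^ 2 + α * Lg * ‖v - u‖ ^ 2 + 2 * ε * (α + 1) := by
        linarith only [s1, s2, c2']
      linarith only [s5, p1, p2, hW2]
    -- remove δ
    by_contra hcon
    push_neg at hcon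
    set D := infDist (x (t + 1)) S with hD
    set d := infDist (x t) S with hd
    set L := 2 * α * μ * D + (1 - α * (ρ + 1)) * D ^ 2 - 2 * ε * (α + 1) with hL
    have hd0 : 0 ≤ d := infDist_nonneg
    have hδpos : 0 < min 1 ((L - d ^ 2) / (2 * d + 2)) :=
      lt_min one_pos (div_pos (by linarith only [hcon]) (by linarith only [hd0]))
    have h := hδb _ hδpos
    set δ := min 1 ((L - d ^ 2) / (2 * d + 2)) with hδdef
    have hδ1 : δ ≤ 1 := min_le_left _ _
    have hδ2 : δ ≤ (L - d ^ 2) / (2 * d + 2) := min_le_right _ _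
    have hδle : δ * (2 * d + 2) ≤ L - d ^ 2 := by
      rw [← le_div_iff₀ (by linarith only [hd0] : (0:ℝ) < 2 * d + 2)]; exact hδ2
    have hsq : δ * δ ≤ δ * 1 := mul_le_mul_of_nonneg_left hδ1 hδpos.le
    linarith only [h, hδle, hsq, hcon, hδpos]
  -- set up the contraction factor
  set d0 := infDist (x t₀) S with hd0def
  have hd0pos : 0 < d0 := lt_of_le_of_lt hEm0 h₀
  have hden : 0 < d0 + Em := by linarith only [hd0pos, hEm0]
  set ζ := 1 - α * (ρ + 1) + 2 * α * μ / (d0 + Em) with hζdef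
  have hsum : (ρ + 1) * (d0 + Em) < 2 * μ := by
    linarith only [mul_lt_mul_of_pos_left h₀' hρ1, hEm', hEp']
  have hζ1 : 1 < ζ := by
    rw [hζdef]
    have h1 : α * (ρ + 1) < 2 * α * μ / (d0 + Em) := by
      rw [lt_div_iff₀ hden]
      linarith only [mul_lt_mul_of_pos_left hsum hα]
    linarith only [h1]
  have hζpos : 0 < ζ := by linarith only [hζ1]
  have hinvζ : 0 ≤ 1 / ζ := by positivity
  have h1ζlt : 1 / ζ < 1 := by rw [div_lt_one hζpos]; exact hζ1
  -- quadratic facts about Em and d0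
  have hd0ψ : α * (ρ + 1) * d0 ^ 2 - 2 * α * μ * d0 + 2 * ε * (α + 1) < 0 := by
    have ha : 0 < (ρ + 1) * d0 - (μ - Δ) := by
      linarith only [mul_lt_mul_of_pos_left h₀ hρ1, hEm']
    have hb : 0 < (μ + Δ) - (ρ + 1) * d0 := by
      linarith only [mul_lt_mul_of_pos_left h₀' hρ1, hEp']
    have expand : (ρ + 1) * (α * (ρ + 1) * d0 ^ 2 - 2 * α * μ * d0 + 2 * ε * (α + 1))
        = α * ((ρ + 1) * d0 - μ) ^ 2 - α * Δ ^ 2 := by linear_combination hΔsq'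
    have hprod : 0 < α * (((ρ + 1) * d0 - (μ - Δ)) * ((μ + Δ) - (ρ + 1) * d0)) :=
      mul_pos hα (mul_pos ha hb)
    nlinarith only [expand, hprod, hρ1]
  have hψEm0 : α * (ρ + 1) * Em ^ 2 - 2 * α * μ * Em + 2 * ε * (α + 1) = 0 := by
    have expandEm : (ρ + 1) * (α * (ρ + 1) * Em ^ 2 - 2 * α * μ * Em + 2 * ε * (α + 1))
        = α * ((ρ + 1) * Em - μ) ^ 2 - α * Δ ^ 2 := by linear_combination hΔsq'
    have h2 : (ρ + 1) * Em - μ = -Δ := by linarith only [hEm']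
    have h3 : (ρ + 1) * (α * (ρ + 1) * Em ^ 2 - 2 * α * μ * Em + 2 * ε * (α + 1)) = 0 := by
      rw [expandEm, h2]; ring
    exact (mul_eq_zero.mp h3).resolve_left hρ1.ne'
  have hd0sqEm : 0 < d0 ^ 2 - Em ^ 2 := by
    have h := mul_pos (sub_pos.2 h₀) (show 0 < d0 + Em by linarith only [hd0pos, hEm0])
    linarith only [h]
  -- the main induction
  have main : ∀ k : ℕ, infDist (x (t₀ + k)) S ≤ d0 ∧
      infDist (x (t₀ + k)) S ^ 2 - Em ^ 2 ≤ (1 / ζ) ^ k * (d0 ^ 2 - Em ^ 2) := by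
    intro k
    induction k with
    | zero => exact ⟨by simp [hd0def], by simp [hd0def]⟩
    | succ k ih =>
      obtain ⟨ih1, ih2⟩ := ih
      have hkey := key (t₀ + k)
      have hD0 : 0 ≤ infDist (x (t₀ + k + 1)) S := infDist_nonneg
      have hdk0 : 0 ≤ infDist (x (t₀ + k)) S := infDist_nonneg
      have hdksq : infDist (x (t₀ + k)) S ^ 2 ≤ d0 ^ 2 := pow_le_pow_left₀ hdk0 ih1 2
      have hgoal_eq : t₀ + (k + 1) = t₀ + k + 1 := rfl
      rw [hgoal_eq]
      set D := infDist (x (t₀ + k + 1)) S with hDdef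
      by_cases hcase : D ≤ Em
      · constructor
        · linarith only [hcase, hEm0, h₀]
        · have h1 : D ^ 2 - Em ^ 2 ≤ 0 := by
            have h := pow_le_pow_left₀ hD0 hcase 2
            linarith only [h]
          have hpow : 0 ≤ (1 / ζ) ^ (k + 1) * (d0 ^ 2 - Em ^ 2) :=
            mul_nonneg (pow_nonneg hinvζ _) hd0sqEm.le
          linarith only [h1, hpow]
      · push_neg at hcase
        have hDd0 : D ≤ d0 := by
          by_contra hc; push_neg at hc
          have p1 : 0 < 2 * α * μ * (D - d0) :=
            mul_pos (mul_pos (mul_pos (by norm_num) hα) hμ) (by linarith only [hc])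
          have p2 : 0 ≤ (1 - α * (ρ + 1)) * ((D - d0) * (D + d0)) :=
            mul_nonneg hc₁.le (mul_nonneg (by linarith only [hc]) (by linarith only [hD0, hd0pos]))
          linarith only [hkey, hdksq, hd0ψ, p1, p2]
        refine ⟨hDd0, ?_⟩
        have h6 : 2 * α * μ / (d0 + Em) * (D ^ 2 - Em ^ 2) ≤ 2 * α * μ * (D - Em) := by
          rw [div_mul_eq_mul_div, div_le_iff₀ hden]
          have hp := mul_nonneg (mul_nonneg (mul_nonneg
            (by norm_num : (0:ℝ) ≤ 2) hα.le) hμ.le)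
            (mul_nonneg (sub_nonneg.2 hcase.le) (sub_nonneg.2 hDd0))
          linarith only [hp]
        have hzstep : ζ * (D ^ 2 - Em ^ 2) ≤ infDist (x (t₀ + k)) S ^ 2 - Em ^ 2 := by
          rw [hζdef]
          linarith only [h6, hψEm0, hkey]
        have hstep : D ^ 2 - Em ^ 2 ≤ 1 / ζ * (infDist (x (t₀ + k)) S ^ 2 - Em ^ 2) := by
          rw [div_mul_eq_mul_div, le_div_iff₀ hζpos]
          linarith only [hzstep]
        calc D ^ 2 - Em ^ 2 ≤ 1 / ζ * (infDist (x (t₀ + k)) S ^ 2 - Em ^ 2) := hstep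
          _ ≤ 1 / ζ * ((1 / ζ) ^ k * (d0 ^ 2 - Em ^ 2)) :=
              mul_le_mul_of_nonneg_left ih2 hinvζ
          _ = (1 / ζ) ^ (k + 1) * (d0 ^ 2 - Em ^ 2) := by rw [pow_succ]; ring
  -- geometric decay statement
  have hgeo : ∀ t ≥ t₀, infDist (x t) S ^ 2 - Em ^ 2
      ≤ (1 / ζ) ^ (t - t₀) * (d0 ^ 2 - Em ^ 2) := by
    intro t ht
    obtain ⟨k, rfl⟩ := Nat.exists_eq_add_of_le ht
    rw [Nat.add_sub_cancel_left]
    exact (main k).2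
  refine ⟨⟨ζ, hζ1, hgeo⟩, ?_⟩
  -- limsup part
  have hEv : ∀ c : ℝ, 0 < c → ∀ᶠ t : ℕ in atTop, infDist (x t) S ≤ Em + c := by
    intro c hc
    have htend : Tendsto (fun t : ℕ => (1 / ζ) ^ (t - t₀) * (d0 ^ 2 - Em ^ 2)) atTop (𝓝 0) := by
      have h1 : Tendsto (fun n : ℕ => (1 / ζ) ^ n) atTop (𝓝 0) :=
        tendsto_pow_atTop_nhds_zero_of_lt_one hinvζ h1ζlt
      have h2 := (h1.comp (tendsto_sub_atTop_nat t₀)).mul_const (d0 ^ 2 - Em ^ 2)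
      simpa [Function.comp] using h2
    have hposc : (0:ℝ) < 2 * Em * c + c ^ 2 := by
      have h1 := mul_nonneg (mul_nonneg (by norm_num : (0:ℝ) ≤ 2) hEm0) hc.le
      have h2 := mul_pos hc hc
      nlinarith only [h1, h2]
    have hlt := htend.eventually (gt_mem_nhds hposc)
    filter_upwards [hlt, eventually_ge_atTop t₀] with t h1 h2
    have h3 := hgeo t h2
    have h4 : 0 ≤ infDist (x t) S := infDist_nonneg
    nlinarith only [h1, h3, h4, hEm0, hc]
  have hcb : IsCoboundedUnder (· ≤ ·) atTop (fun t : ℕ => infDist (x t) S) :=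
    isCoboundedUnder_le_of_eventually_le atTop (x := 0)
      (Filter.Eventually.of_forall fun t => infDist_nonneg)
  by_contra hcon
  push_neg at hcon
  set L := limsup (fun t : ℕ => infDist (x t) S) atTop with hLdef
  have hc : 0 < (L - Em) / 2 := div_pos (by linarith only [hcon]) two_pos
  have hfin := Filter.limsup_le_of_le hcb (hEv _ hc)
  rw [← hLdef] at hfin
  linarith only [hfin, hcon]
end

section
/- Assume the standing assumptions on f and g, that f+g satisfies the global sharpness condition with constant μ > 0, and that ε and α satisfy the parameter assumption, with E⁻ and E⁺ defined accordingly. Let (x_t) be an inexact forward–backward sequence with constant step size α and accuracy ε. If there exists t₀ ∈ ℕ such that E⁻ < dist(x_t,S) < E⁺ for all t ≥ t₀, then Σ_{t≥t₀} ‖x_t − x_{t+1}‖ < +∞, so (x_t) is a Cauchy sequence and converges strongly in X. -/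
open Metric Filter
open scoped RealInnerProductSpace Topology

section Aux
variable {X : Type*} [NormedAddCommGroup X] [InnerProductSpace ℝ X] [CompleteSpace X]

lemma stmt13_line_hasDerivAt (g : X → ℝ) (g' : X → X) (hg : ∀ x, HasGradientAt g (g' x) x)
    (a v : X) (t : ℝ) :
    HasDerivAt (fun t : ℝ => g (a + t • v)) ⟪g' (a + t • v), v⟫ t := by
  have hc : HasDerivAt (fun t : ℝ => a + t • v) v t := by
    simpa using ((hasDerivAt_id t).smul_const v).const_add a
  have := ((hg (a + t • v)).hasFDerivAt.comp_hasDerivAt t hc)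
  simpa [Function.comp_def] using this

lemma stmt13_g_subgrad (g : X → ℝ) (g' : X → X) (hg_conv : ConvexOn ℝ Set.univ g)
    (hg : ∀ x, HasGradientAt g (g' x) x) (a b : X) :
    g a + ⟪g' a, b - a⟫ ≤ g b := by
  set v := b - a
  have hder : HasDerivAt (fun t : ℝ => g (a + t • v)) ⟪g' a, v⟫ 0 := by
    simpa using stmt13_line_hasDerivAt g g' hg a v 0
  have hslope : ∀ t : ℝ, t ∈ Set.Ioc (0:ℝ) 1 →
      slope (fun t : ℝ => g (a + t • v)) 0 t ≤ g b - g a := by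
    intro t ht
    have h1 : g (a + t • v) ≤ (1 - t) * g a + t * g b := by
      have := hg_conv.2 (Set.mem_univ a) (Set.mem_univ b) (by linarith [ht.2] : (0:ℝ) ≤ 1 - t)
        ht.1.le (by ring)
      have he : (1 - t) • a + t • b = a + t • v := by
        simp [v, smul_sub, sub_smul]; abel
      rw [he] at this; simpa [smul_eq_mul] using this
    have hsl : slope (fun t : ℝ => g (a + t • v)) 0 t = (g (a + t • v) - g a) / t := by
      simp [slope_def_field]
    rw [hsl]
    rw [div_le_iff₀ ht.1]
    nlinarith [ht.1]
  have htend : Tendsto (slope (fun t : ℝ => g (a + t • v)) 0) (𝓝[>] 0) (𝓝 ⟪g' a, v⟫) := by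
    have := hasDerivAt_iff_tendsto_slope.1 hder
    exact this.mono_left (nhdsWithin_mono _ (by intro y hy; exact ne_of_gt hy))
  have : ⟪g' a, v⟫ ≤ g b - g a := by
    refine le_of_tendsto htend ?_
    filter_upwards [Ioc_mem_nhdsGT_of_mem (by norm_num : (0:ℝ) ∈ Set.Ico (0:ℝ) 1)] with t ht
    exact hslope t ht
  linarith

lemma stmt13_g_descent (g : X → ℝ) (g' : X → X) (Lg : ℝ)
    (hg : ∀ x, HasGradientAt g (g' x) x)
    (hg_lip : ∀ x y, ‖g' x - g' y‖ ≤ Lg * ‖x - y‖) (a b : X) :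
    g b ≤ g a + ⟪g' a, b - a⟫ + Lg / 2 * ‖b - a‖ ^ 2 := by
  set v := b - a
  set ψ : ℝ → ℝ := fun t => Lg / 2 * ‖v‖ ^ 2 * t ^ 2 + t * ⟪g' a, v⟫ - g (a + t • v)
  have hψder : ∀ t : ℝ, HasDerivAt ψ (Lg * ‖v‖ ^ 2 * t + ⟪g' a, v⟫ - ⟪g' (a + t • v), v⟫) t := by
    intro t
    have h1 : HasDerivAt (fun t : ℝ => Lg / 2 * ‖v‖ ^ 2 * t ^ 2 + t * ⟪g' a, v⟫)
        (Lg / 2 * ‖v‖ ^ 2 * (2 * t) + ⟪g' a, v⟫) t := by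
      have := ((hasDerivAt_pow 2 t).const_mul (Lg / 2 * ‖v‖ ^ 2)).fun_add
        ((hasDerivAt_id t).mul_const ⟪g' a, v⟫)
      simpa using this
    have := h1.fun_sub (stmt13_line_hasDerivAt g g' hg a v t)
    exact this.congr_deriv (by ring)
  have hmono : MonotoneOn ψ (Set.Icc 0 1) := by
    apply monotoneOn_of_deriv_nonneg (convex_Icc 0 1)
    · exact Continuous.continuousOn
        (continuous_iff_continuousAt.2 fun t => (hψder t).differentiableAt.continuousAt)
    · intro t _; exact (hψder t).differentiableAt.differentiableWithinAt
    · intro t ht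
      rw [interior_Icc] at ht
      rw [(hψder t).deriv]
      have hlip : ⟪g' (a + t • v), v⟫ - ⟪g' a, v⟫ ≤ Lg * t * ‖v‖ ^ 2 := by
        have h1 : ⟪g' (a + t • v) - g' a, v⟫ ≤ ‖g' (a + t • v) - g' a‖ * ‖v‖ :=
          real_inner_le_norm _ _
        have h2 : ‖g' (a + t • v) - g' a‖ ≤ Lg * (t * ‖v‖) := by
          have := hg_lip (a + t • v) a
          simpa [norm_smul, abs_of_pos ht.1] using this
        have h3 : ⟪g' (a + t • v) - g' a, v⟫ = ⟪g' (a + t • v), v⟫ - ⟪g' a, v⟫ := by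
          simp [inner_sub_left]
        nlinarith [norm_nonneg v, norm_nonneg (g' (a + t • v) - g' a)]
      linarith
  have := hmono (Set.left_mem_Icc.2 zero_le_one) (Set.right_mem_Icc.2 zero_le_one) zero_le_one
  simp only [ψ] at this
  simp only [zero_smul, add_zero, one_smul, zero_pow, mul_zero, zero_mul] at this
  have he : a + v = b := by simp [v]
  rw [he] at this
  nlinarith [this]

end Aux

set_option maxHeartbeats 1000000 in
/-- Corollary 6.1: under the standing assumptions, global sharpness of `f+g`
with const `μ > 0`, and the parameter assumptions on `ε` and `α`, for an inexact
forward–backward sequence: if `E⁻ < dist(x_t,S) < E⁺` for all `t ≥ t₀`, then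
`Σ_t ‖x_t − x_{t+1}‖ < ∞`, so `(x_t)` is a Cauchy sequence and converges strongly. -/
theorem stmt_13 {X : Type*} [NormedAddCommGroup X] [InnerProductSpace ℝ X] [CompleteSpace X]
    (f : X → EReal) (g : X → ℝ) (g' : X → X) (ρ Lg : ℝ) (hρ : 0 ≤ ρ)
    (hf_proper : (∃ x, f x ≠ ⊤) ∧ ∀ x, f x ≠ ⊥)
    (hf_lsc : LowerSemicontinuous f)
    (hf_wc : ∀ x y : X, ∀ l : ℝ, 0 ≤ l → l ≤ 1 →
      f (l • x + (1 - l) • y) ≤ ((l : ℝ) : EReal) * f x + ((1 - l : ℝ) : EReal) * f y +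
        ((l * (1 - l) * (ρ / 2) * ‖x - y‖ ^ 2 : ℝ) : EReal))
    (hf_bdd : ∃ m : ℝ, ∀ x, ((m : ℝ) : EReal) ≤ f x)
    (hg_conv : ConvexOn ℝ Set.univ g)
    (hg_diff : ∀ x, HasGradientAt g (g' x) x)
    (hg_lip : ∀ x y, ‖g' x - g' y‖ ≤ Lg * ‖x - y‖)
    (S : Set X)
    (hS : S = {x : X | ∀ y : X, f x + ((g x : ℝ) : EReal) ≤ f y + ((g y : ℝ) : EReal)})
    (hSne : S.Nonempty)
    (μ : ℝ) (hμ : 0 < μ)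
    (hsharp : ∀ x : X,
      sInf (Set.range fun y : X => f y + ((g y : ℝ) : EReal)) +
          ((μ * Metric.infDist x S : ℝ) : EReal) ≤ f x + ((g x : ℝ) : EReal))
    (α ε : ℝ) (hα : 0 < α) (hε0 : 0 ≤ ε)
    (hεlt : ε < μ ^ 2 / (2 * (ρ + 1)) * min (1 / (Lg + 1)) (1 / (ρ + 2)))
    (hαlb : 2 * ε * (ρ + 1) / (μ ^ 2 - 2 * ε * (ρ + 1)) ≤ α)
    (hαub : α < min (1 / Lg) (1 / (ρ + 1)))
    (Em Ep : ℝ)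
    (hEm : Em = (μ - Real.sqrt (μ ^ 2 - 2 * ε * (ρ + 1) * (α + 1) / α)) / (ρ + 1))
    (hEp : Ep = (μ + Real.sqrt (μ ^ 2 - 2 * ε * (ρ + 1) * (α + 1) / α)) / (ρ + 1))
    (x : ℕ → X)
    (hseq : ∀ t : ℕ, ∀ z : X,
      f (x (t + 1)) +
          ((1 / (2 * α) * ‖x (t + 1) - (x t - α • g' (x t))‖ ^ 2 : ℝ) : EReal) ≤
        f z + ((1 / (2 * α) * ‖z - (x t - α • g' (x t))‖ ^ 2 + ε : ℝ) : EReal))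
    (t₀ : ℕ)
    (hband : ∀ t ≥ t₀, Em < Metric.infDist (x t) S ∧ Metric.infDist (x t) S < Ep) :
    Summable (fun t : ℕ => ‖x t - x (t + 1)‖) ∧
    CauchySeq x ∧
    ∃ p : X, Filter.Tendsto x Filter.atTop (nhds p) := by
  -- basic parameter facts
  have hρ1 : (0:ℝ) < ρ + 1 := by linarith
  have hLg : 0 < Lg := by
    by_contra h
    push_neg at h
    have h1 : α < 1 / Lg := lt_of_lt_of_le hαub (min_le_left _ _)
    have : 1 / Lg ≤ 0 := by
      rcases lt_or_eq_of_le h with h' | h'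
      · exact le_of_lt (one_div_neg.2 h')
      · rw [h']; norm_num
    linarith
  have hαLg : α * Lg < 1 := by
    have h1 : α < 1 / Lg := lt_of_lt_of_le hαub (min_le_left _ _)
    rw [lt_div_iff₀ hLg] at h1; linarith
  have hαρ1 : α * (ρ + 1) < 1 := by
    have h1 : α < 1 / (ρ + 1) := lt_of_lt_of_le hαub (min_le_right _ _)
    rw [lt_div_iff₀ hρ1] at h1; linarith
  clear hf_lsc hf_bdd
  -- finite values on S
  obtain ⟨x₀, hx₀⟩ := hf_proper.1
  have hSmem : ∀ s ∈ S, ∀ y : X, f s + ((g s : ℝ) : EReal) ≤ f y + ((g y : ℝ) : EReal) := by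
    intro s hs
    rw [hS] at hs
    exact hs
  have hfS_ne_top : ∀ s ∈ S, f s ≠ ⊤ := by
    intro s hs htop
    have h2 := hSmem s hs x₀
    have hfx0 : f x₀ = (((f x₀).toReal : ℝ) : EReal) := (EReal.coe_toReal hx₀ (hf_proper.2 x₀)).symm
    rw [htop, EReal.top_add_coe, hfx0] at h2
    have h3 : ((⊤:EReal)) ≤ ((((f x₀).toReal + g x₀ : ℝ)) : EReal) := by push_cast; exact h2
    exact EReal.coe_ne_top _ (top_le_iff.1 h3)
  -- positivity of combined coefficients
  have haa0 : 0 < 1/(2*α) - (ρ+1)/2 := by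
    have h1 : ρ + 1 < 1/α := by rw [lt_div_iff₀ hα]; linarith
    have h2 : 1/(2*α) = (1/α)/2 := by ring
    linarith
  have hcc0 : 0 < 1/(2*α) - Lg/2 := by
    have h1 : Lg < 1/α := by rw [lt_div_iff₀ hα]; linarith
    have h2 : 1/(2*α) = (1/α)/2 := by ring
    linarith
  -- the one-step inequality
  have key0 : ∀ t : ℕ, μ * infDist (x (t+1)) S
      + (1/(2*α) - (ρ+1)/2) * infDist (x (t+1)) S ^ 2
      + (1/(2*α) - Lg/2) * ‖x (t+1) - x t‖^2
      ≤ 1/(2*α) * infDist (x t) S ^ 2 + ε*(α+1)/α := by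
    intro t
    have keyδ : ∀ δ : ℝ, 0 < δ → μ * infDist (x (t+1)) S
        + (1/(2*α) - (ρ+1)/2) * infDist (x (t+1)) S ^ 2
        + (1/(2*α) - Lg/2) * ‖x (t+1) - x t‖^2
        ≤ 1/(2*α) * (infDist (x t) S + δ) ^ 2 + ε*(α+1)/α := by
      intro δ hδ
      obtain ⟨s, hsS, hds⟩ := (Metric.infDist_lt_iff hSne).1
        (show infDist (x t) S < infDist (x t) S + δ by linarith)
      set x' := x (t+1) with hx'
      set xt := x t with hxt
      set v := g' xt with hv
      set yy := xt - α • v with hyy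
      have h1αρ : 0 < 1 - α * ρ := by
        have : α * (ρ+1) = α*ρ + α := by ring
        linarith only [hαρ1, hα, this]
      set l := α / (1 - α * ρ) with hl
      have hl0 : 0 < l := div_pos hα h1αρ
      have hl1 : l < 1 := by
        rw [hl, div_lt_one h1αρ]
        have : α * (ρ+1) = α*ρ + α := by ring
        linarith only [hαρ1, this]
      have hfs_t : f s ≠ ⊤ := hfS_ne_top s hsS
      have hfs_b : f s ≠ ⊥ := hf_proper.2 s
      set rs := (f s).toReal with hrs
      have hfs : f s = ((rs : ℝ) : EReal) := (EReal.coe_toReal hfs_t hfs_b).symm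
      have hfx_b : f x' ≠ ⊥ := hf_proper.2 _
      have hfx_t : f x' ≠ ⊤ := by
        intro htop
        have h2 := hseq t s
        rw [← hx', ← hxt, ← hv, ← hyy, htop, EReal.top_add_coe, hfs] at h2
        have h3 : ((⊤:EReal)) ≤ ((rs + (1 / (2 * α) * ‖s - yy‖ ^ 2 + ε) : ℝ) : EReal) := by
          push_cast; exact h2
        exact EReal.coe_ne_top _ (top_le_iff.1 h3)
      set r1 := (f x').toReal with hr1def
      have hfx : f x' = ((r1 : ℝ) : EReal) := (EReal.coe_toReal hfx_t hfx_b).symm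
      set z := l • s + (1 - l) • x' with hzdef
      have hwc := hf_wc s x' l hl0.le hl1.le
      rw [← hzdef, hfs, hfx] at hwc
      have hwc' : f z ≤ ((l*rs + (1-l)*r1 + l*(1-l)*(ρ/2)*‖s - x'‖^2 : ℝ) : EReal) := by
        refine le_trans hwc (le_of_eq ?_)
        norm_cast
      have hstep := hseq t z
      rw [← hx', ← hxt, ← hv, ← hyy, hfx] at hstep
      have hchain : ((r1 + 1/(2*α) * ‖x' - yy‖^2 : ℝ) : EReal)
          ≤ ((l*rs + (1-l)*r1 + l*(1-l)*(ρ/2)*‖s - x'‖^2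
              + (1/(2*α) * ‖z - yy‖^2 + ε) : ℝ) : EReal) := by
        push_cast
        exact le_trans hstep (add_le_add_left hwc' _)
      have hcombR : r1 + 1/(2*α) * ‖x' - yy‖^2
          ≤ l*rs + (1-l)*r1 + l*(1-l)*(ρ/2)*‖s - x'‖^2
            + (1/(2*α) * ‖z - yy‖^2 + ε) := by exact_mod_cast hchain
      set ip := ⟪x' - yy, s - x'⟫ with hipdef
      have hzy : z - yy = (x' - yy) + l • (s - x') := by
        rw [hzdef]; module
      have hexp : ‖z - yy‖^2 = ‖x' - yy‖^2 + 2*(l*ip) + l^2*‖s - x'‖^2 := by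
        rw [hzy, norm_add_sq_real, real_inner_smul_right, norm_smul]
        rw [mul_pow, Real.norm_eq_abs, sq_abs]
      have hα' : α ≠ 0 := ne_of_gt hα
      have hdiv : r1 ≤ rs + (1-l)*(ρ/2)*‖s - x'‖^2 + l/(2*α)*‖s - x'‖^2
          + 1/α*ip + ε/l := by
        have h := hcombR
        rw [hexp] at h
        have expand : l * (rs + (1-l)*(ρ/2)*‖s - x'‖^2 + l/(2*α)*‖s - x'‖^2
            + 1/α*ip + ε/l)
            = l*rs + l*(1-l)*(ρ/2)*‖s - x'‖^2 + l^2/(2*α)*‖s - x'‖^2 + l/α*ip + ε := by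
          field_simp
        have h2 : l * r1 ≤ l * (rs + (1-l)*(ρ/2)*‖s - x'‖^2 + l/(2*α)*‖s - x'‖^2
            + 1/α*ip + ε/l) := by
          rw [expand]
          ring_nf at h ⊢
          linarith only [h]
        exact le_of_mul_le_mul_left h2 hl0
      have hxy' : x' - yy = (x' - xt) + α • v := by rw [hyy]; module
      have hipα : 1/α*ip = 1/α*⟪x' - xt, s - x'⟫ + ⟪v, s - x'⟫ := by
        rw [hipdef, hxy', inner_add_left, real_inner_smul_left]
        field_simp
      have hpol : ⟪x' - xt, s - x'⟫
          = (‖s - xt‖^2 - ‖s - x'‖^2 - ‖x' - xt‖^2)/2 := by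
        have he : ‖s - xt‖^2 = ‖s - x'‖^2 + 2*⟪s - x', x' - xt⟫ + ‖x' - xt‖^2 := by
          rw [show s - xt = (s - x') + (x' - xt) from by abel, norm_add_sq_real]
        have hc : ⟪s - x', x' - xt⟫ = ⟪x' - xt, s - x'⟫ := real_inner_comm _ _
        rw [hc] at he
        linarith
      have hpolα : 1/α*⟪x' - xt, s - x'⟫
          = 1/(2*α)*‖s - xt‖^2 - 1/(2*α)*‖s - x'‖^2 - 1/(2*α)*‖x' - xt‖^2 := by
        rw [hpol]; ring
      have hsub : ⟪v, s - xt⟫ ≤ g s - g xt := by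
        have := stmt13_g_subgrad g g' hg_conv hg_diff xt s
        linarith
      have hdes : ⟪v, xt - x'⟫ ≤ g xt - g x' + Lg/2 * ‖x' - xt‖^2 := by
        have h1 := stmt13_g_descent g g' Lg hg_diff hg_lip xt x'
        have h2 : ⟪v, xt - x'⟫ = -⟪v, x' - xt⟫ := by
          rw [show xt - x' = -(x' - xt) from by abel, inner_neg_right]
        linarith
      have hsplit : ⟪v, s - x'⟫ = ⟪v, s - xt⟫ + ⟪v, xt - x'⟫ := by
        rw [← inner_add_right]
        congr 1
        abel
      have hFs : ((rs + g s : ℝ) : EReal)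
          ≤ sInf (Set.range fun y : X => f y + ((g y : ℝ) : EReal)) := by
        apply le_sInf
        rintro b ⟨y', rfl⟩
        push_cast
        rw [← hfs]
        exact hSmem s hsS y'
      have hsharpR : rs + g s + μ * infDist x' S ≤ r1 + g x' := by
        have h1 : ((rs + g s : ℝ) : EReal) + ((μ * infDist x' S : ℝ) : EReal)
            ≤ f x' + ((g x' : ℝ) : EReal) :=
          le_trans (add_le_add_left hFs _) (hsharp x')
        rw [hfx] at h1
        exact_mod_cast h1
      have hw : infDist x' S ≤ ‖s - x'‖ := by
        have h1 := Metric.infDist_le_dist_of_mem (x := x') hsS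
        rwa [dist_eq_norm, norm_sub_rev] at h1
      have hw2 : infDist x' S ^ 2 ≤ ‖s - x'‖^2 :=
        pow_le_pow_left₀ Metric.infDist_nonneg hw 2
      have haaw : (1/(2*α) - (ρ+1)/2) * infDist x' S ^ 2
          ≤ (1/(2*α) - (ρ+1)/2) * ‖s - x'‖^2 :=
        mul_le_mul_of_nonneg_left hw2 haa0.le
      have hsxt : ‖s - xt‖ ≤ infDist xt S + δ := by
        rw [norm_sub_rev, ← dist_eq_norm]
        exact hds.le
      have hsxt2 : ‖s - xt‖^2 ≤ (infDist xt S + δ)^2 :=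
        pow_le_pow_left₀ (norm_nonneg _) hsxt 2
      have hsxt2' : 1/(2*α)*‖s - xt‖^2 ≤ 1/(2*α)*(infDist xt S + δ)^2 :=
        mul_le_mul_of_nonneg_left hsxt2 (by positivity)
      have hco2 : (1-l)*(ρ/2)*‖s - x'‖^2 + l/(2*α)*‖s - x'‖^2
          = (ρ+1)/2*‖s - x'‖^2 := by
        have hco : (1-l)*(ρ/2) + l/(2*α) = (ρ+1)/2 := by
          rw [hl]
          field_simp
          ring
        linear_combination ‖s - x'‖^2 * hco
      have hεl : ε/l ≤ ε*(α+1)/α := by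
        have h1 : ε/l = ε*(1-α*ρ)/α := by
          rw [hl]
          field_simp
        rw [h1, div_le_div_iff_of_pos_right hα]
        have h2 : 0 ≤ ε*(α*ρ+α) := mul_nonneg hε0 (by positivity)
        have h3 : ε*(1-α*ρ) = ε - ε*(α*ρ) := by ring
        have h4 : ε*(α+1) = ε*α + ε := by ring
        linarith only [h2, h3, h4, mul_nonneg hε0 hα.le]
      linarith only [hdiv, hipα, hpolα, hsub, hdes, hsplit, hsharpR, haaw, hsxt2', hco2, hεl]
    -- pass to the limit δ → 0
    refine le_of_forall_pos_le_add ?_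
    intro η hη
    set d := infDist (x t) S with hd
    have hd0 : 0 ≤ d := Metric.infDist_nonneg
    set δ := min 1 (2*α*η/(2*d+1)) with hδdef
    have hδ0 : 0 < δ := lt_min one_pos (by positivity)
    have h := keyδ δ hδ0
    have hδle : δ ≤ 2*α*η/(2*d+1) := min_le_right _ _
    have hδ1 : δ ≤ 1 := min_le_left _ _
    have hbd : 1/(2*α) * (d + δ)^2 ≤ 1/(2*α) * d^2 + η := by
      have h1 : 1/(2*α) * (d + δ)^2 = 1/(2*α)*d^2 + 1/(2*α)*((2*d + δ)*δ) := by ring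
      have h2 : (2*d + δ)*δ ≤ (2*d + 1)*δ := by
        have := mul_nonneg (by linarith only [hδ1] : (0:ℝ) ≤ 1 - δ) hδ0.le
        linarith only [this]
      have h3 : (2*d+1)*δ ≤ 2*α*η := by
        rw [le_div_iff₀ (by positivity : (0:ℝ) < 2*d+1)] at hδle
        linarith only [hδle]
      have h4 : 1/(2*α) * ((2*d+δ)*δ) ≤ 1/(2*α) * (2*α*η) :=
        mul_le_mul_of_nonneg_left (h2.trans h3) (by positivity)
      have h5 : 1/(2*α) * (2*α*η) = η := by field_simp
      linarith only [h1, h4, h5]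
    linarith only [h, hbd]
  -- discriminant and factorization of Q
  have harg : 0 ≤ μ^2 - 2*ε*(ρ+1)*(α+1)/α := by
    have hmin : min (1/(Lg+1)) (1/(ρ+2)) ≤ 1 :=
      le_trans (min_le_right _ _) (by rw [div_le_one (by linarith)]; linarith)
    have hμρ : (0:ℝ) < μ^2/(2*(ρ+1)) := by positivity
    have hε2 : ε < μ^2/(2*(ρ+1)) := lt_of_lt_of_le hεlt (mul_le_of_le_one_right hμρ.le hmin)
    have hμ2 : 2*ε*(ρ+1) < μ^2 := by
      rw [lt_div_iff₀ (by positivity : (0:ℝ) < 2*(ρ+1))] at hε2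
      linarith only [hε2]
    have hd : 2*ε*(ρ+1) ≤ α*(μ^2 - 2*ε*(ρ+1)) := by
      rw [div_le_iff₀ (by linarith : (0:ℝ) < μ^2 - 2*ε*(ρ+1))] at hαlb
      linarith only [hαlb]
    rw [sub_nonneg, div_le_iff₀ hα]
    have e1 : 2*ε*(ρ+1)*(α+1) = α*(2*ε*(ρ+1)) + 2*ε*(ρ+1) := by ring
    linarith only [hd, e1]
  set sq := Real.sqrt (μ^2 - 2*ε*(ρ+1)*(α+1)/α) with hsqdef
  have hsq2 : sq^2 = μ^2 - 2*ε*(ρ+1)*(α+1)/α := Real.sq_sqrt harg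
  have hsq0 : 0 ≤ sq := Real.sqrt_nonneg _
  have hsqμ : sq ≤ μ := by
    rw [hsqdef]
    calc Real.sqrt (μ^2 - 2*ε*(ρ+1)*(α+1)/α) ≤ Real.sqrt (μ^2) :=
          Real.sqrt_le_sqrt (sub_le_self _ (by positivity))
      _ = μ := Real.sqrt_sq hμ.le
  have hEm0 : 0 ≤ Em := by
    rw [hEm]
    exact div_nonneg (by linarith only [hsqμ]) hρ1.le
  have hαne : α ≠ 0 := ne_of_gt hα
  have hρne : ρ + 1 ≠ 0 := ne_of_gt hρ1
  have hsumEm : Em + Ep = 2*μ/(ρ+1) := by rw [hEm, hEp]; ring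
  have hμid : (ρ+1)/2*(Em + Ep) = μ := by rw [hsumEm]; field_simp; try ring
  have hprod : Em * Ep = (μ^2 - sq^2)/(ρ+1)^2 := by
    rw [hEm, hEp]
    field_simp
    ring
  have hprod2 : (ρ+1)/2 * (Em*Ep) = ε*(α+1)/α := by
    rw [hprod]
    rw [show μ^2 - sq^2 = 2*ε*(ρ+1)*(α+1)/α from by linarith only [hsq2]]
    field_simp
  have hQf : ∀ d : ℝ, (ρ+1)/2*d^2 - μ*d + ε*(α+1)/α = (ρ+1)/2*(d - Em)*(d - Ep) := by
    intro d
    linear_combination d * hμid - hprod2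
  -- Lyapunov sequence
  set V : ℕ → ℝ := fun t => 1/(2*α)*((infDist (x t) S)^2 - Em^2) with hV
  have hR1 : ∀ t, t₀ ≤ t → V (t+1) + (1/(2*α) - Lg/2)*‖x (t+1) - x t‖^2
      ≤ V t + (ρ+1)/2*(infDist (x (t+1)) S - Em)*(infDist (x (t+1)) S - Ep) := by
    intro t ht
    have h := key0 t
    have hq := hQf (infDist (x (t+1)) S)
    simp only [hV]
    linarith only [h, hq]
  have hVnn : ∀ t, t₀ ≤ t → 0 ≤ V t := by
    intro t ht
    have hb := (hband t ht).1
    have h2 : Em^2 ≤ infDist (x t) S^2 := pow_le_pow_left₀ hEm0 hb.le 2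
    simp only [hV]
    exact mul_nonneg (by positivity) (by linarith only [h2])
  have hQneg : ∀ t, t₀ ≤ t →
      (ρ+1)/2*(infDist (x (t+1)) S - Em)*(infDist (x (t+1)) S - Ep) ≤ 0 := by
    intro t ht
    have hb := hband (t+1) (le_trans ht (Nat.le_succ t))
    have h1 : 0 ≤ (ρ+1)/2*(infDist (x (t+1)) S - Em) :=
      mul_nonneg (by positivity) (by linarith only [hb.1])
    have h3 : 0 ≤ Ep - infDist (x (t+1)) S := by linarith only [hb.2]
    have h2 : (ρ+1)/2*(infDist (x (t+1)) S - Em)*(infDist (x (t+1)) S - Ep)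
        = -((ρ+1)/2*(infDist (x (t+1)) S - Em)*(Ep - infDist (x (t+1)) S)) := by ring
    rw [h2]
    exact neg_nonpos.mpr (mul_nonneg h1 h3)
  have hccΔ : ∀ t : ℕ, 0 ≤ (1/(2*α) - Lg/2)*‖x (t+1) - x t‖^2 :=
    fun t => mul_nonneg hcc0.le (by positivity)
  have hVdec : ∀ t, t₀ ≤ t → V (t+1) ≤ V t := by
    intro t ht
    linarith only [hR1 t ht, hQneg t ht, hccΔ t]
  have hVle1 : ∀ t, t₀+1 ≤ t → V t ≤ V (t₀+1) := by
    intro t ht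
    induction t, ht using Nat.le_induction with
    | base => exact le_refl _
    | succ n hn ih => exact le_trans (hVdec n (by omega)) ih
  have hDle1 : ∀ t, t₀+1 ≤ t → infDist (x t) S ≤ infDist (x (t₀+1)) S := by
    intro t ht
    have h1 := hVle1 t ht
    simp only [hV] at h1
    have h3 : (0:ℝ) < 1/(2*α) := by positivity
    have h2 : infDist (x t) S^2 ≤ infDist (x (t₀+1)) S^2 := by
      by_contra hc
      push_neg at hc
      have := mul_lt_mul_of_pos_left (by linarith only [hc] :
        infDist (x (t₀+1)) S^2 - Em^2 < infDist (x t) S^2 - Em^2) h3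
      linarith only [this, h1]
    have := Real.sqrt_le_sqrt h2
    rwa [Real.sqrt_sq Metric.infDist_nonneg, Real.sqrt_sq Metric.infDist_nonneg] at this
  set γ := Ep - infDist (x (t₀+1)) S with hγ
  have hγ0 : 0 < γ := by
    have := (hband (t₀+1) (by omega)).2
    simp only [hγ]
    linarith only [this]
  set K := (Ep + Em)/(2*α) with hK
  have hK0 : 0 < K := by
    have h1 : 0 < Em + Ep := by rw [hsumEm]; positivity
    exact div_pos (by linarith only [h1]) (by positivity)
  set κ := (ρ+1)/2*γ with hκ
  have hκ0 : 0 < κ := mul_pos (by positivity) hγ0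
  have hKκ : 0 < K + κ := by linarith only [hK0, hκ0]
  have hVr : ∀ t, t₀ ≤ t → V (t+1) ≤ K/(K+κ) * V t := by
    intro t ht
    have h1 := hR1 t ht
    have hb := hband (t+1) (by omega)
    have hDt1 : infDist (x (t+1)) S ≤ infDist (x (t₀+1)) S := hDle1 (t+1) (by omega)
    have h2 : (ρ+1)/2*(infDist (x (t+1)) S - Em)*(infDist (x (t+1)) S - Ep)
        ≤ -(κ*(infDist (x (t+1)) S - Em)) := by
      have ha : 0 ≤ infDist (x (t+1)) S - Em := by linarith only [hb.1]
      have hc : infDist (x (t+1)) S - Ep ≤ -γ := by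
        simp only [hγ]
        linarith only [hDt1]
      have hmul := mul_le_mul_of_nonneg_left hc
        (mul_nonneg (by positivity : (0:ℝ) ≤ (ρ+1)/2) ha)
      have he : (ρ+1)/2*(infDist (x (t+1)) S - Em)*(-γ)
          = -(κ*(infDist (x (t+1)) S - Em)) := by simp only [hκ]; ring
      have he2 : (ρ+1)/2*(infDist (x (t+1)) S - Em)*(infDist (x (t+1)) S - Ep)
          = (ρ+1)/2*(infDist (x (t+1)) S - Em)*(infDist (x (t+1)) S - Ep) := rfl
      calc (ρ+1)/2*(infDist (x (t+1)) S - Em)*(infDist (x (t+1)) S - Ep)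
          ≤ (ρ+1)/2*(infDist (x (t+1)) S - Em)*(-γ) := by
            have := mul_le_mul_of_nonneg_left hc
              (mul_nonneg (by positivity : (0:ℝ) ≤ (ρ+1)/2) ha)
            linarith only [this]
        _ = -(κ*(infDist (x (t+1)) S - Em)) := he
    have h3 : V (t+1) ≤ K*(infDist (x (t+1)) S - Em) := by
      simp only [hV]
      have ha : 0 ≤ infDist (x (t+1)) S - Em := by linarith only [hb.1]
      have hb2 : infDist (x (t+1)) S + Em ≤ Ep + Em := by linarith only [hb.2]
      have hfac : 1/(2*α)*((infDist (x (t+1)) S)^2 - Em^2)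
          = 1/(2*α)*((infDist (x (t+1)) S + Em)*(infDist (x (t+1)) S - Em)) := by ring
      rw [hfac]
      have h4 : (infDist (x (t+1)) S + Em)*(infDist (x (t+1)) S - Em)
          ≤ (Ep + Em)*(infDist (x (t+1)) S - Em) := mul_le_mul_of_nonneg_right hb2 ha
      have h5 := mul_le_mul_of_nonneg_left h4 (by positivity : (0:ℝ) ≤ 1/(2*α))
      have h6 : 1/(2*α)*((Ep + Em)*(infDist (x (t+1)) S - Em))
          = K*(infDist (x (t+1)) S - Em) := by simp only [hK]; ring
      linarith only [h5, h6]
    have h4 : V (t+1) ≤ V t - κ*(infDist (x (t+1)) S - Em) := by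
      linarith only [h1, h2, hccΔ t]
    have h5 : (K+κ)*V (t+1) ≤ K*V t := by
      have h6 := mul_le_mul_of_nonneg_left h3 hκ0.le
      have h7 := mul_le_mul_of_nonneg_left h4 hK0.le
      nlinarith [h6, h7]
    rw [div_mul_eq_mul_div, le_div_iff₀ hKκ]
    linarith only [h5]
  set r := K/(K+κ) with hr
  have hr0 : 0 ≤ r := le_of_lt (div_pos hK0 hKκ)
  have hr1 : r < 1 := by rw [hr, div_lt_one hKκ]; linarith only [hκ0]
  have hVgeo : ∀ n : ℕ, V (t₀+n) ≤ r^n * V t₀ := by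
    intro n
    induction n with
    | zero => simp
    | succ n ih =>
      have h1 := hVr (t₀+n) (by omega)
      have h2 : r * V (t₀+n) ≤ r * (r^n * V t₀) := mul_le_mul_of_nonneg_left ih hr0
      have h3 : r * (r^n * V t₀) = r^(n+1) * V t₀ := by ring
      calc V (t₀+(n+1)) = V ((t₀+n)+1) := rfl
        _ ≤ r * V (t₀+n) := h1
        _ ≤ r^(n+1) * V t₀ := by linarith only [h2, h3]
  have hΔV : ∀ t, t₀ ≤ t → (1/(2*α) - Lg/2)*‖x (t+1) - x t‖^2 ≤ V t := by
    intro t ht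
    linarith only [hR1 t ht, hQneg t ht, hVnn (t+1) (by omega)]
  set M := Real.sqrt ((V t₀)/(1/(2*α) - Lg/2)) with hM
  set rr := Real.sqrt r with hrr
  have hVt₀ : 0 ≤ V t₀ := hVnn t₀ (le_refl _)
  have hM2 : M^2 = (V t₀)/(1/(2*α) - Lg/2) := Real.sq_sqrt (by positivity)
  have hrr2 : rr^2 = r := Real.sq_sqrt hr0
  have hrr0 : 0 ≤ rr := Real.sqrt_nonneg _
  have hrr1 : rr < 1 := by
    rw [hrr, show (1:ℝ) = Real.sqrt 1 by simp]
    exact Real.sqrt_lt_sqrt hr0 (by simpa using hr1)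
  have hstep_bound : ∀ n : ℕ, ‖x (t₀+n) - x (t₀+n+1)‖ ≤ M * rr^n := by
    intro n
    have h1 : (1/(2*α) - Lg/2)*‖x (t₀+n+1) - x (t₀+n)‖^2 ≤ r^n * V t₀ :=
      le_trans (hΔV (t₀+n) (by omega)) (hVgeo n)
    have h2 : ‖x (t₀+n) - x (t₀+n+1)‖^2 ≤ (M * rr^n)^2 := by
      have h3 : (M*rr^n)^2 = (V t₀)/(1/(2*α) - Lg/2) * r^n := by
        rw [mul_pow, hM2, ← pow_mul, mul_comm n 2, pow_mul, hrr2]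
      rw [norm_sub_rev, h3, div_mul_eq_mul_div, le_div_iff₀ hcc0]
      linarith only [h1]
    have h4 : 0 ≤ M * rr^n := mul_nonneg (Real.sqrt_nonneg _) (pow_nonneg hrr0 n)
    exact le_of_pow_le_pow_left₀ two_ne_zero h4 h2
  have hfun : (fun n : ℕ => ‖x (n+t₀) - x (n+t₀+1)‖)
      = (fun n : ℕ => ‖x (t₀+n) - x (t₀+n+1)‖) := by
    funext n
    rw [Nat.add_comm n t₀]
  have hsum0 : Summable (fun n : ℕ => ‖x (n+t₀) - x (n+t₀+1)‖) := by
    rw [hfun]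
    exact Summable.of_nonneg_of_le (fun n => norm_nonneg _) hstep_bound
      ((summable_geometric_of_lt_one hrr0 hrr1).mul_left M)
  have hsum : Summable (fun t : ℕ => ‖x t - x (t+1)‖) :=
    (summable_nat_add_iff t₀).1 hsum0
  have hcauchy : CauchySeq x := by
    apply cauchySeq_of_summable_dist
    simpa [dist_eq_norm] using hsum
  exact ⟨hsum, hcauchy, cauchySeq_tendsto_of_complete hcauchy⟩
end

section
/- Assume the standing assumptions on f and g with ρ > 0, and that f+g satisfies the global sharpness condition with constant μ > 0. Let (x_t) be an exact forward–backward sequence with constant step size α satisfying 0 < α < min{1/L_g, 1/ρ}. Then: (a) for every t, either dist(x_{t+1},S) = 0 or (1 − αρ + 2αμ/dist(x_{t+1},S))·dist²(x_{t+1},S) ≤ dist²(x_t,S); and (b) if dist(x_{t₀},S) < 2μ/ρ for some t₀ ∈ ℕ, then dist(x_t,S) < 2μ/ρ for all t ≥ t₀, and the factor 1 − αρ + 2αμ/dist(x_{t+1},S) is > 1 whenever t ≥ t₀ and dist(x_{t+1},S) > 0. -/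
open Metric Filter
open scoped RealInnerProductSpace

private lemma comb_sq' {X : Type*} [NormedAddCommGroup X] [InnerProductSpace ℝ X]
    (a b : X) (l : ℝ) :
    ‖l • a + (1 - l) • b‖ ^ 2 =
      l * ‖a‖ ^ 2 + (1 - l) * ‖b‖ ^ 2 - l * (1 - l) * ‖a - b‖ ^ 2 := by
  have h1 : ‖l • a + (1 - l) • b‖ ^ 2
      = l^2 * ‖a‖^2 + 2 * (l * (1-l)) * ⟪a, b⟫ + (1-l)^2 * ‖b‖^2 := by
    rw [norm_add_sq_real, norm_smul, norm_smul, real_inner_smul_left, real_inner_smul_right]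
    simp [mul_pow, sq_abs]
    ring
  have h2 : ‖a - b‖ ^ 2 = ‖a‖^2 - 2 * ⟪a, b⟫ + ‖b‖^2 := norm_sub_sq_real a b
  linear_combination h1 + l * (1 - l) * h2

private lemma expand_sq' {X : Type*} [NormedAddCommGroup X] [InnerProductSpace ℝ X]
    (u w : X) (c : ℝ) :
    ‖u + c • w‖ ^ 2 = ‖u‖ ^ 2 + 2 * c * ⟪w, u⟫ + c ^ 2 * ‖w‖ ^ 2 := by
  rw [norm_add_sq_real, norm_smul, real_inner_smul_right, real_inner_comm]
  simp [mul_pow, sq_abs]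
  ring

private lemma line_hasDerivAt' {X : Type*} [NormedAddCommGroup X] [InnerProductSpace ℝ X]
    [CompleteSpace X]
    (g : X → ℝ) (g' : X → X) (hg_diff : ∀ x, HasGradientAt g (g' x) x)
    (x v : X) (t : ℝ) :
    HasDerivAt (fun s : ℝ => g (x + s • v)) ⟪g' (x + t • v), v⟫ t := by
  have hline : HasDerivAt (fun s : ℝ => x + s • v) v t := by
    simpa using ((hasDerivAt_id t).smul_const v).const_add x
  have hF := (hg_diff (x + t • v)).hasFDerivAt
  have := hF.comp_hasDerivAt t hline
  simpa [InnerProductSpace.toDual_apply_apply, Function.comp_def] using this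

private lemma grad_ineq' {X : Type*} [NormedAddCommGroup X] [InnerProductSpace ℝ X]
    [CompleteSpace X]
    (g : X → ℝ) (g' : X → X) (hg_conv : ConvexOn ℝ Set.univ g)
    (hg_diff : ∀ x, HasGradientAt g (g' x) x) (x y : X) :
    g x + ⟪g' x, y - x⟫ ≤ g y := by
  set v := y - x with hv
  set φ : ℝ → ℝ := fun s => g (x + s • v) with hφ
  have hder : HasDerivAt φ ⟪g' x, v⟫ 0 := by
    simpa using line_hasDerivAt' g g' hg_diff x v 0
  have hslope := hasDerivAt_iff_tendsto_slope.1 hder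
  have hslope' : Filter.Tendsto (slope φ 0) (nhdsWithin 0 (Set.Ioi 0)) (nhds ⟪g' x, v⟫) :=
    hslope.mono_left (nhdsWithin_mono _ (fun s hs => ne_of_gt hs))
  have key : ⟪g' x, v⟫ ≤ g y - g x := by
    apply le_of_tendsto hslope'
    show ∀ᶠ s in nhdsWithin (0:ℝ) (Set.Ioi 0), slope φ 0 s ≤ g y - g x
    filter_upwards [Ioc_mem_nhdsGT_of_mem (Set.left_mem_Ico.2 one_pos)] with s hs
    have hs0 : (0:ℝ) < s := hs.1
    have hs1 : s ≤ 1 := hs.2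
    have hc : x + s • v = (1 - s) • x + s • y := by
      rw [hv]; rw [smul_sub, sub_smul, one_smul]; abel
    have := hg_conv.2 (Set.mem_univ x) (Set.mem_univ y) (by linarith) (le_of_lt hs0)
      (by ring : (1 - s) + s = 1)
    have hφs : φ s ≤ (1 - s) * g x + s * g y := by
      rw [hφ]; simpa [hc] using this
    have hφ0 : φ 0 = g x := by simp [hφ]
    rw [slope_def_field, div_le_iff₀ (by simpa using hs0)]
    calc φ s - φ 0 ≤ (1 - s) * g x + s * g y - g x := by rw [hφ0]; linarith
      _ = (g y - g x) * (s - 0) := by ring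
  linarith

private lemma descent' {X : Type*} [NormedAddCommGroup X] [InnerProductSpace ℝ X]
    [CompleteSpace X]
    (g : X → ℝ) (g' : X → X) (Lg : ℝ)
    (hg_diff : ∀ x, HasGradientAt g (g' x) x)
    (hg_lip : ∀ x y, ‖g' x - g' y‖ ≤ Lg * ‖x - y‖) (x y : X) :
    g y ≤ g x + ⟪g' x, y - x⟫ + Lg / 2 * ‖y - x‖ ^ 2 := by
  set v := y - x with hv
  set ψ : ℝ → ℝ := fun s => g (x + s • v) - s * ⟪g' x, v⟫ - Lg / 2 * s ^ 2 * ‖v‖ ^ 2 with hψ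
  have hderψ : ∀ t : ℝ, HasDerivAt ψ
      (⟪g' (x + t • v), v⟫ - ⟪g' x, v⟫ - Lg * t * ‖v‖ ^ 2) t := by
    intro t
    have h1 := line_hasDerivAt' g g' hg_diff x v t
    have h2 : HasDerivAt (fun s : ℝ => s * ⟪g' x, v⟫) ⟪g' x, v⟫ t := by
      simpa using (hasDerivAt_id t).mul_const ⟪g' x, v⟫
    have h3 : HasDerivAt (fun s : ℝ => Lg / 2 * s ^ 2 * ‖v‖ ^ 2) (Lg * t * ‖v‖ ^ 2) t := by
      have h : HasDerivAt (fun s : ℝ => s ^ 2) (2 * t) t := by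
        simpa using hasDerivAt_pow 2 t
      have := (h.const_mul (Lg / 2)).mul_const (‖v‖ ^ 2)
      rw [show Lg * t * ‖v‖ ^ 2 = Lg / 2 * (2 * t) * ‖v‖ ^ 2 by ring]
      exact this
    exact (h1.sub h2).sub h3
  have hdiffψ : Differentiable ℝ ψ := fun t => (hderψ t).differentiableAt
  have hmono : AntitoneOn ψ (Set.Icc (0:ℝ) 1) := by
    apply antitoneOn_of_deriv_nonpos (convex_Icc 0 1)
    · exact hdiffψ.continuous.continuousOn
    · intro t ht
      exact (hdiffψ t).differentiableWithinAt
    · intro t ht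
      rw [interior_Icc] at ht
      rw [(hderψ t).deriv]
      have h4 : ⟪g' (x + t • v) - g' x, v⟫ ≤ Lg * t * ‖v‖ ^ 2 := by
        calc ⟪g' (x + t • v) - g' x, v⟫ ≤ ‖g' (x + t • v) - g' x‖ * ‖v‖ :=
              real_inner_le_norm _ _
          _ ≤ (Lg * ‖(x + t • v) - x‖) * ‖v‖ := by
              gcongr; exact hg_lip _ _
          _ = Lg * t * ‖v‖ ^ 2 := by
              simp [norm_smul, abs_of_pos ht.1]; ring
      have h5 : ⟪g' (x + t • v) - g' x, v⟫ = ⟪g' (x + t • v), v⟫ - ⟪g' x, v⟫ :=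
        inner_sub_left _ _ _
      linarith
  have h01 := hmono (Set.left_mem_Icc.2 zero_le_one) (Set.right_mem_Icc.2 zero_le_one) zero_le_one
  have hψ0 : ψ 0 = g x := by simp [hψ]
  have hψ1 : ψ 1 = g y - ⟪g' x, v⟫ - Lg / 2 * ‖v‖ ^ 2 := by
    simp [hψ, hv]
  rw [hψ0, hψ1] at h01
  linarith

private lemma ereal_ne_top_of_le {a b : EReal} {r r' : ℝ}
    (h : a + (r:EReal) ≤ b + (r':EReal)) (hb : b ≠ ⊤) : a ≠ ⊤ := by
  intro ha
  rw [ha] at h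
  have h1 : b + (r':EReal) < ⊤ := EReal.add_lt_top hb (EReal.coe_ne_top r')
  rw [EReal.top_add_coe] at h
  exact absurd (top_le_iff.1 h) (ne_of_lt h1)

set_option maxHeartbeats 1000000 in
/-- Lemma 7.1: under the standing assumptions with `ρ > 0` and global sharpness
of `f+g` with constant `μ > 0`, for an exact forward–backward sequence with constant step size
`0 < α < min{1/L_g, 1/ρ}`: (a) for every `t`, either `dist(x_{t+1},S) = 0` or
`(1 − αρ + 2αμ/dist(x_{t+1},S))·dist²(x_{t+1},S) ≤ dist²(x_t,S)`; (b) if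
`dist(x_{t₀},S) < 2μ/ρ` then `dist(x_t,S) < 2μ/ρ` for all `t ≥ t₀`, and the contraction
factor is `> 1` whenever `t ≥ t₀` and `dist(x_{t+1},S) > 0`. -/
theorem stmt_14 {X : Type*} [NormedAddCommGroup X] [InnerProductSpace ℝ X] [CompleteSpace X]
    (f : X → EReal) (g : X → ℝ) (g' : X → X) (ρ Lg : ℝ) (hρ : 0 < ρ)
    (hf_proper : (∃ x, f x ≠ ⊤) ∧ ∀ x, f x ≠ ⊥)
    (hf_lsc : LowerSemicontinuous f)
    (hf_wc : ∀ x y : X, ∀ l : ℝ, 0 ≤ l → l ≤ 1 →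
      f (l • x + (1 - l) • y) ≤ ((l : ℝ) : EReal) * f x + ((1 - l : ℝ) : EReal) * f y +
        ((l * (1 - l) * (ρ / 2) * ‖x - y‖ ^ 2 : ℝ) : EReal))
    (hf_bdd : ∃ m : ℝ, ∀ x, ((m : ℝ) : EReal) ≤ f x)
    (hg_conv : ConvexOn ℝ Set.univ g)
    (hg_diff : ∀ x, HasGradientAt g (g' x) x)
    (hg_lip : ∀ x y, ‖g' x - g' y‖ ≤ Lg * ‖x - y‖)
    (S : Set X)
    (hS : S = {x : X | ∀ y : X, f x + ((g x : ℝ) : EReal) ≤ f y + ((g y : ℝ) : EReal)})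
    (hSne : S.Nonempty)
    (μ : ℝ) (hμ : 0 < μ)
    (hsharp : ∀ x : X,
      sInf (Set.range fun y : X => f y + ((g y : ℝ) : EReal)) +
          ((μ * Metric.infDist x S : ℝ) : EReal) ≤ f x + ((g x : ℝ) : EReal))
    (α : ℝ) (hα : 0 < α) (hαub : α < min (1 / Lg) (1 / ρ))
    (x : ℕ → X)
    (hseq : ∀ t : ℕ, ∀ z : X,
      f (x (t + 1)) +
          ((1 / (2 * α) * ‖x (t + 1) - (x t - α • g' (x t))‖ ^ 2 : ℝ) : EReal) ≤
        f z + ((1 / (2 * α) * ‖z - (x t - α • g' (x t))‖ ^ 2 : ℝ) : EReal)) :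
    (∀ t : ℕ,
      Metric.infDist (x (t + 1)) S = 0 ∨
      (1 - α * ρ + 2 * α * μ / Metric.infDist (x (t + 1)) S) *
          (Metric.infDist (x (t + 1)) S) ^ 2 ≤ (Metric.infDist (x t) S) ^ 2) ∧
    (∀ t₀ : ℕ, Metric.infDist (x t₀) S < 2 * μ / ρ →
      ∀ t ≥ t₀,
        Metric.infDist (x t) S < 2 * μ / ρ ∧
        (0 < Metric.infDist (x (t + 1)) S →
          1 < 1 - α * ρ + 2 * α * μ / Metric.infDist (x (t + 1)) S)) := by
  obtain ⟨⟨x₀, hx₀⟩, hfbot⟩ := hf_proper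
  have hdnn : ∀ t : ℕ, 0 ≤ Metric.infDist (x t) S := fun t => Metric.infDist_nonneg
  have hLg : 0 < Lg := by
    by_contra h
    push_neg at h
    have h1 : α < 1 / Lg := lt_of_lt_of_le hαub (min_le_left _ _)
    rcases lt_or_eq_of_le h with h' | h'
    · have : 1 / Lg < 0 := one_div_neg.2 h'
      linarith
    · rw [h'] at h1
      simp at h1
      linarith
  have hαLg : α * Lg < 1 := by
    have h1 : α < 1 / Lg := lt_of_lt_of_le hαub (min_le_left _ _)
    rw [lt_div_iff₀ hLg] at h1
    exact h1
  have hαρ : α * ρ < 1 := by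
    have h1 : α < 1 / ρ := lt_of_lt_of_le hαub (min_le_right _ _)
    rw [lt_div_iff₀ hρ] at h1
    exact h1
  have hα' : α ≠ 0 := ne_of_gt hα
  have hβ : (0:ℝ) < 1 / (2 * α) := by positivity
  have hβα : 2 * α * (1 / (2 * α)) = 1 := by field_simp
  have hfS : ∀ s ∈ S, f s ≠ ⊤ := by
    intro s hs
    rw [hS] at hs
    exact ereal_ne_top_of_le (hs x₀) hx₀
  -- key inequality
  have key : ∀ t : ℕ,
      2 * α * μ * Metric.infDist (x (t + 1)) S
        + (1 - α * ρ) * (Metric.infDist (x (t + 1)) S) ^ 2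
      ≤ (Metric.infDist (x t) S) ^ 2 := by
    intro t
    have hq_netop : f (x (t + 1)) ≠ ⊤ := ereal_ne_top_of_le (hseq t x₀) hx₀
    have hfq : f (x (t + 1)) = (((f (x (t + 1))).toReal : ℝ) : EReal) :=
      (EReal.coe_toReal hq_netop (hfbot _)).symm
    have hddnn : 0 ≤ Metric.infDist (x (t + 1)) S := hdnn (t + 1)
    -- per-minimizer estimate
    have stepE : ∀ s ∈ S,
        μ * Metric.infDist (x (t + 1)) S
          + (1 / (2 * α) - ρ / 2) * (Metric.infDist (x (t + 1)) S) ^ 2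
        ≤ 1 / (2 * α) * ‖s - x t‖ ^ 2 := by
      intro s hs
      have hs_netop : f s ≠ ⊤ := hfS s hs
      have hfs : f s = (((f s).toReal : ℝ) : EReal) :=
        (EReal.coe_toReal hs_netop (hfbot s)).symm
      have key_l : ∀ l : ℝ, 0 < l → l ≤ 1 →
          (f (x (t + 1))).toReal + 1 / (2 * α) * ‖x (t + 1) - (x t - α • g' (x t))‖ ^ 2
            + (1 - l) * (1 / (2 * α) - ρ / 2) * ‖s - x (t + 1)‖ ^ 2
          ≤ (f s).toReal + 1 / (2 * α) * ‖s - (x t - α • g' (x t))‖ ^ 2 := by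
        intro l hl0 hl1
        have h1 := hseq t (l • s + (1 - l) • x (t + 1))
        have h2 := hf_wc s (x (t + 1)) l hl0.le hl1
        have hz : f (l • s + (1 - l) • x (t + 1))
            ≤ (((l * (f s).toReal + (1 - l) * (f (x (t + 1))).toReal
                + l * (1 - l) * (ρ / 2) * ‖s - x (t + 1)‖ ^ 2 : ℝ)) : EReal) := by
          rw [hfs, hfq] at h2
          calc f (l • s + (1 - l) • x (t + 1))
              ≤ ((l : ℝ) : EReal) * (((f s).toReal : ℝ) : EReal)
                + ((1 - l : ℝ) : EReal) * (((f (x (t + 1))).toReal : ℝ) : EReal)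
                + ((l * (1 - l) * (ρ / 2) * ‖s - x (t + 1)‖ ^ 2 : ℝ) : EReal) := h2
            _ = _ := by
                rw [← EReal.coe_mul, ← EReal.coe_mul, ← EReal.coe_add, ← EReal.coe_add]
        have h3 : (((f (x (t + 1))).toReal
              + 1 / (2 * α) * ‖x (t + 1) - (x t - α • g' (x t))‖ ^ 2 : ℝ) : EReal)
            ≤ ((l * (f s).toReal + (1 - l) * (f (x (t + 1))).toReal
                + l * (1 - l) * (ρ / 2) * ‖s - x (t + 1)‖ ^ 2
                + 1 / (2 * α) * ‖l • s + (1 - l) • x (t + 1) - (x t - α • g' (x t))‖ ^ 2 : ℝ)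
                : EReal) := by
          rw [EReal.coe_add, EReal.coe_add, ← hfq]
          exact le_trans h1 (add_le_add_left hz _)
        have h4 := EReal.coe_le_coe_iff.1 h3
        have h5 : ‖l • s + (1 - l) • x (t + 1) - (x t - α • g' (x t))‖ ^ 2
            = l * ‖s - (x t - α • g' (x t))‖ ^ 2
              + (1 - l) * ‖x (t + 1) - (x t - α • g' (x t))‖ ^ 2
              - l * (1 - l) * ‖s - x (t + 1)‖ ^ 2 := by
          have e : l • s + (1 - l) • x (t + 1) - (x t - α • g' (x t))
              = l • (s - (x t - α • g' (x t))) + (1 - l) • (x (t + 1) - (x t - α • g' (x t))) := by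
            module
          rw [e, comb_sq']
          have e2 : s - (x t - α • g' (x t)) - (x (t + 1) - (x t - α • g' (x t)))
              = s - x (t + 1) := by abel
          rw [e2]
        rw [h5] at h4
        have h6 : l * ((f (x (t + 1))).toReal
              + 1 / (2 * α) * ‖x (t + 1) - (x t - α • g' (x t))‖ ^ 2
              + (1 - l) * (1 / (2 * α) - ρ / 2) * ‖s - x (t + 1)‖ ^ 2)
            ≤ l * ((f s).toReal + 1 / (2 * α) * ‖s - (x t - α • g' (x t))‖ ^ 2) := by
          linarith [h4]
        exact le_of_mul_le_mul_left h6 hl0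
      have stepC : (f (x (t + 1))).toReal
            + 1 / (2 * α) * ‖x (t + 1) - (x t - α • g' (x t))‖ ^ 2
            + (1 / (2 * α) - ρ / 2) * ‖s - x (t + 1)‖ ^ 2
          ≤ (f s).toReal + 1 / (2 * α) * ‖s - (x t - α • g' (x t))‖ ^ 2 := by
        have hlim : Tendsto (fun n : ℕ =>
            (f (x (t + 1))).toReal
              + 1 / (2 * α) * ‖x (t + 1) - (x t - α • g' (x t))‖ ^ 2
              + (1 - 1 / ((n : ℝ) + 1)) * (1 / (2 * α) - ρ / 2) * ‖s - x (t + 1)‖ ^ 2)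
            atTop (nhds ((f (x (t + 1))).toReal
              + 1 / (2 * α) * ‖x (t + 1) - (x t - α • g' (x t))‖ ^ 2
              + (1 - 0) * (1 / (2 * α) - ρ / 2) * ‖s - x (t + 1)‖ ^ 2)) := by
          apply tendsto_const_nhds.add
          exact (((tendsto_const_nhds.sub tendsto_one_div_add_atTop_nhds_zero_nat).mul
            tendsto_const_nhds).mul tendsto_const_nhds)
        have hle := le_of_tendsto hlim (Filter.Eventually.of_forall (fun n => by
          exact key_l (1 / ((n : ℝ) + 1)) (by positivity) (by
            rw [div_le_one (by positivity)]; linarith [Nat.cast_nonneg (α := ℝ) n])))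
        simpa using hle
      have stepD : (f s).toReal + g s + μ * Metric.infDist (x (t + 1)) S
          ≤ (f (x (t + 1))).toReal + g (x (t + 1)) := by
        have hsS := hs
        rw [hS] at hsS
        have hmin : f s + ((g s : ℝ) : EReal)
            ≤ sInf (Set.range fun y : X => f y + ((g y : ℝ) : EReal)) := by
          apply le_sInf
          rintro _ ⟨y', rfl⟩
          exact hsS y'
        have hch : f s + ((g s : ℝ) : EReal)
              + ((μ * Metric.infDist (x (t + 1)) S : ℝ) : EReal)
            ≤ f (x (t + 1)) + ((g (x (t + 1)) : ℝ) : EReal) :=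
          le_trans (add_le_add_left hmin _) (hsharp (x (t + 1)))
        rw [hfs, hfq] at hch
        exact_mod_cast hch
      have e1 : ‖x (t + 1) - (x t - α • g' (x t))‖ ^ 2
          = ‖x (t + 1) - x t‖ ^ 2 + 2 * α * ⟪g' (x t), x (t + 1) - x t⟫
            + α ^ 2 * ‖g' (x t)‖ ^ 2 := by
        have e : x (t + 1) - (x t - α • g' (x t)) = (x (t + 1) - x t) + α • (g' (x t)) := by
          abel
        rw [e, expand_sq']
      have e2 : ‖s - (x t - α • g' (x t))‖ ^ 2
          = ‖s - x t‖ ^ 2 + 2 * α * ⟪g' (x t), s - x t⟫ + α ^ 2 * ‖g' (x t)‖ ^ 2 := by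
        have e : s - (x t - α • g' (x t)) = (s - x t) + α • (g' (x t)) := by abel
        rw [e, expand_sq']
      have G1 : g (x t) + ⟪g' (x t), s - x t⟫ ≤ g s := grad_ineq' g g' hg_conv hg_diff (x t) s
      have G2 : g (x (t + 1)) ≤ g (x t) + ⟪g' (x t), x (t + 1) - x t⟫
          + Lg / 2 * ‖x (t + 1) - x t‖ ^ 2 := descent' g g' Lg hg_diff hg_lip (x t) (x (t + 1))
      have hIq : 2 * α * (1 / (2 * α)) * ⟪g' (x t), x (t + 1) - x t⟫
          = ⟪g' (x t), x (t + 1) - x t⟫ := by rw [hβα]; ring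
      have hIs : 2 * α * (1 / (2 * α)) * ⟪g' (x t), s - x t⟫ = ⟪g' (x t), s - x t⟫ := by
        rw [hβα]; ring
      have hLgβ : Lg / 2 ≤ 1 / (2 * α) := by
        rw [div_le_div_iff₀ (by norm_num) (by positivity)]
        nlinarith
      have hqp : (0:ℝ) ≤ ‖x (t + 1) - x t‖ ^ 2 := by positivity
      have h8 : (0:ℝ) ≤ (1 / (2 * α) - Lg / 2) * ‖x (t + 1) - x t‖ ^ 2 :=
        mul_nonneg (by linarith) hqp
      have hdist : Metric.infDist (x (t + 1)) S ≤ ‖s - x (t + 1)‖ := by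
        have h := Metric.infDist_le_dist_of_mem (x := x (t + 1)) hs
        rwa [dist_comm, dist_eq_norm] at h
      have hcoef : (0:ℝ) ≤ 1 / (2 * α) - ρ / 2 := by
        rw [sub_nonneg, div_le_div_iff₀ (by norm_num) (by positivity)]
        nlinarith
      have hdd2 : (Metric.infDist (x (t + 1)) S) ^ 2 ≤ ‖s - x (t + 1)‖ ^ 2 := by
        have := pow_le_pow_left₀ hddnn hdist 2
        simpa using this
      have h7 := mul_le_mul_of_nonneg_left hdd2 hcoef
      rw [e1, e2] at stepC
      linarith [stepC, G1, G2, stepD, hIq, hIs, h7, h8]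
    -- take infimum over s ∈ S
    have hinf : μ * Metric.infDist (x (t + 1)) S
          + (1 / (2 * α) - ρ / 2) * (Metric.infDist (x (t + 1)) S) ^ 2
        ≤ 1 / (2 * α) * (Metric.infDist (x t) S) ^ 2 := by
      have hseqs : ∀ n : ℕ, μ * Metric.infDist (x (t + 1)) S
            + (1 / (2 * α) - ρ / 2) * (Metric.infDist (x (t + 1)) S) ^ 2
          ≤ 1 / (2 * α) * (Metric.infDist (x t) S + 1 / ((n : ℝ) + 1)) ^ 2 := by
        intro n
        have hlt : Metric.infDist (x t) S < Metric.infDist (x t) S + 1 / ((n : ℝ) + 1) := by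
          have : (0:ℝ) < 1 / ((n : ℝ) + 1) := by positivity
          linarith
        obtain ⟨s, hsS, hdist⟩ := (Metric.infDist_lt_iff hSne).1 hlt
        have h1 := stepE s hsS
        have h2 : ‖s - x t‖ ^ 2 ≤ (Metric.infDist (x t) S + 1 / ((n : ℝ) + 1)) ^ 2 := by
          have hn : ‖s - x t‖ ≤ Metric.infDist (x t) S + 1 / ((n : ℝ) + 1) := by
            rw [← dist_eq_norm, dist_comm]
            exact hdist.le
          have := pow_le_pow_left₀ (norm_nonneg _) hn 2
          simpa using this
        exact le_trans h1 (mul_le_mul_of_nonneg_left h2 hβ.le)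
      have hlim : Tendsto (fun n : ℕ =>
            1 / (2 * α) * (Metric.infDist (x t) S + 1 / ((n : ℝ) + 1)) ^ 2)
          atTop (nhds (1 / (2 * α) * (Metric.infDist (x t) S + 0) ^ 2)) :=
        (((tendsto_const_nhds.add tendsto_one_div_add_atTop_nhds_zero_nat).pow 2).const_mul _)
      have := ge_of_tendsto hlim (Filter.Eventually.of_forall hseqs)
      simpa using this
    have hm := mul_le_mul_of_nonneg_left hinf (by positivity : (0:ℝ) ≤ 2 * α)
    have e3 : 2 * α * (1 / (2 * α) * (Metric.infDist (x t) S) ^ 2)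
        = (Metric.infDist (x t) S) ^ 2 := by
      field_simp
    have e4 : 2 * α * (μ * Metric.infDist (x (t + 1)) S
          + (1 / (2 * α) - ρ / 2) * (Metric.infDist (x (t + 1)) S) ^ 2)
        = 2 * α * μ * Metric.infDist (x (t + 1)) S
          + (2 * α * (1 / (2 * α)) - α * ρ) * (Metric.infDist (x (t + 1)) S) ^ 2 := by ring
    rw [e4, hβα, e3] at hm
    exact hm
  -- part (b) one-step
  have hBpos : (0:ℝ) < 2 * μ / ρ := by positivity
  have hρB : ρ * (2 * μ / ρ) = 2 * μ := by field_simp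
  have step : ∀ t : ℕ, Metric.infDist (x t) S < 2 * μ / ρ →
      Metric.infDist (x (t + 1)) S < 2 * μ / ρ := by
    intro t h
    by_contra hc
    push_neg at hc
    have hk := key t
    have p1 : (0:ℝ) ≤ (1 - α * ρ) * Metric.infDist (x (t + 1)) S *
        (Metric.infDist (x (t + 1)) S - 2 * μ / ρ) :=
      mul_nonneg (mul_nonneg (sub_nonneg.2 hαρ.le) (hdnn (t + 1))) (sub_nonneg.2 hc)
    have p2 : (0:ℝ) ≤ 2 * μ / ρ * (Metric.infDist (x (t + 1)) S - 2 * μ / ρ) :=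
      mul_nonneg hBpos.le (sub_nonneg.2 hc)
    have p3 : (Metric.infDist (x t) S) ^ 2 < (2 * μ / ρ) ^ 2 :=
      pow_lt_pow_left₀ h (hdnn t) (by norm_num)
    have h5 : α * ρ * (2 * μ / ρ) * Metric.infDist (x (t + 1)) S
        = 2 * α * μ * Metric.infDist (x (t + 1)) S := by
      field_simp
    linarith [hk, p1, p2, p3, h5]
  constructor
  · intro t
    by_cases hdz : Metric.infDist (x (t + 1)) S = 0
    · left; exact hdz
    · right
      have hd0 : 0 < Metric.infDist (x (t + 1)) S :=
        lt_of_le_of_ne (hdnn (t + 1)) (Ne.symm hdz)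
      have e : (1 - α * ρ + 2 * α * μ / Metric.infDist (x (t + 1)) S)
            * (Metric.infDist (x (t + 1)) S) ^ 2
          = (1 - α * ρ) * (Metric.infDist (x (t + 1)) S) ^ 2
            + 2 * α * μ * Metric.infDist (x (t + 1)) S := by
        field_simp
      rw [e]
      linarith [key t]
  · intro t₀ h₀ t ht
    have hlt : ∀ u : ℕ, t₀ ≤ u → Metric.infDist (x u) S < 2 * μ / ρ := by
      intro u hu
      induction u, hu using Nat.le_induction with
      | base => exact h₀
      | succ n hn ih => exact step n ih
    refine ⟨hlt t ht, fun hpos => ?_⟩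
    have h2 : Metric.infDist (x (t + 1)) S < 2 * μ / ρ := step t (hlt t ht)
    have h3 : α * ρ < 2 * α * μ / Metric.infDist (x (t + 1)) S := by
      rw [lt_div_iff₀ hpos]
      have h4 : ρ * Metric.infDist (x (t + 1)) S < ρ * (2 * μ / ρ) :=
        mul_lt_mul_of_pos_left h2 hρ
      rw [hρB] at h4
      nlinarith
    linarith
end

section
/- Let 0 < α < 1/2 and y ∈ ℝ, and define h : ℝ → ℝ by h(x) = |x² − 1| + (1/(2α))(x − y)². Then h has a unique global minimizer x*, given by: x* = y/(1+2α) if |y| > 1+2α; x* = y/(1−2α) if |y| < 1−2α; and x* = y/|y| (the sign of y) if 1−2α ≤ |y| ≤ 1+2α. In other words, prox_{α f}(y) = {x*} for f(x) = |x² − 1|. -/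
lemma caseC (α c y x : ℝ) (hα0 : 0 < α) (hα : α < 1/2) (hac : 2*α*c = 1)
    (hy1 : 1 - 2*α ≤ y) (hy2 : y ≤ 1 + 2*α) (hx : x ≠ 1) :
    c*(1-y)^2 < |x^2-1| + c*(x-y)^2 := by
  have hc1 : 1 < c := by nlinarith
  have hy0 : 0 < y := by linarith
  have hcy1 : c*y ≤ c + 1 := by nlinarith
  have hcy2 : c - 1 ≤ c*y := by nlinarith
  rcases le_or_gt 1 x with h1 | h1
  · have hx1 : 1 < x := lt_of_le_of_ne h1 (Ne.symm hx)
    have habs : x^2 - 1 ≤ |x^2-1| := le_abs_self _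
    have h2 : 0 < (1+c)*(x+1) - 2*(c*y) := by
      nlinarith [mul_pos (show (0:ℝ) < 1+c by linarith) (show (0:ℝ) < x-1 by linarith)]
    nlinarith [mul_pos (show (0:ℝ) < x - 1 by linarith) h2]
  · rcases le_or_gt x (-1) with h2 | h2
    · have habs : x^2 - 1 ≤ |x^2-1| := le_abs_self _
      have h3 : (1+c)*(x+1) - 2*(c*y) < 0 := by
        nlinarith [mul_nonpos_of_nonneg_of_nonpos (show (0:ℝ) ≤ 1+c by linarith)
          (show x+1 ≤ 0 by linarith)]
      nlinarith [mul_pos_of_neg_of_neg (show x - 1 < 0 by linarith) h3]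
    · have habs : -(x^2-1) ≤ |x^2-1| := neg_le_abs _
      have h3 : 0 < (1-c)*(x+1) + 2*(c*y) := by
        nlinarith [mul_pos (show (0:ℝ) < c-1 by linarith) (show (0:ℝ) < 1-x by linarith)]
      nlinarith [mul_pos (show (0:ℝ) < 1 - x by linarith) h3]

/-- Remark 8.1, explicit proximal operator of `f(x) = |x² − 1|`: for
`0 < α < 1/2` and `y ∈ ℝ`, the function `h(x) = |x² − 1| + (1/(2α))(x − y)²` has a unique
global minimizer `x*`, given by `x* = y/(1+2α)` if `|y| > 1+2α`, `x* = y/(1−2α)` if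
`|y| < 1−2α`, and `x* = y/|y|` otherwise; i.e. `prox_{αf}(y) = {x*}`. -/
theorem stmt_18 (α y : ℝ) (hα0 : 0 < α) (hα : α < 1 / 2)
    (xstar : ℝ)
    (hxstar : xstar =
      if 1 + 2 * α < |y| then y / (1 + 2 * α)
      else if |y| < 1 - 2 * α then y / (1 - 2 * α)
      else y / |y|) :
    (∀ x : ℝ, |xstar ^ 2 - 1| + 1 / (2 * α) * (xstar - y) ^ 2 ≤
      |x ^ 2 - 1| + 1 / (2 * α) * (x - y) ^ 2) ∧
    (∀ x : ℝ, (∀ z : ℝ, |x ^ 2 - 1| + 1 / (2 * α) * (x - y) ^ 2 ≤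
        |z ^ 2 - 1| + 1 / (2 * α) * (z - y) ^ 2) → x = xstar) := by
  have hstrict : ∀ x : ℝ, x ≠ xstar →
      |xstar ^ 2 - 1| + 1 / (2 * α) * (xstar - y) ^ 2 <
      |x ^ 2 - 1| + 1 / (2 * α) * (x - y) ^ 2 := by
    intro x hx
    set c := 1 / (2 * α) with hcdef
    have hac : 2*α*c = 1 := by rw [hcdef]; field_simp [hα0.ne']
    have hc1 : 1 < c := by
      rw [hcdef, lt_div_iff₀ (by linarith)]; linarith
    have hsq : 0 < (x - xstar)^2 :=
      lt_of_le_of_ne (sq_nonneg _) (Ne.symm (pow_ne_zero 2 (sub_ne_zero.mpr hx)))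
    split_ifs at hxstar with h1 h2
    · -- |y| > 1 + 2α
      have he : (1 + 2*α) * xstar = y := by
        rw [hxstar]; field_simp
      have hy2 : (1+2*α)^2 < y^2 := by
        nlinarith [sq_abs y, abs_nonneg y, mul_pos (show (0:ℝ) < |y| - (1+2*α) by linarith)
          (show (0:ℝ) < |y| + (1+2*α) by nlinarith [abs_nonneg y])]
      have he2 : y^2 = (1+2*α)^2 * xstar^2 := by
        linear_combination (-((1+2*α)*xstar + y))*he
      have hs2 : 1 < xstar^2 := by nlinarith [sq_nonneg (1+2*α), he2]
      have habs_s : |xstar^2 - 1| = xstar^2 - 1 := abs_of_nonneg (by linarith)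
      have hcy : c*y = (c+1)*xstar := by linear_combination (-c)*he + xstar*hac
      have habs : x^2 - 1 ≤ |x^2 - 1| := le_abs_self _
      have key : x^2 - 1 + c*(x-y)^2 - (xstar^2 - 1 + c*(xstar-y)^2)
          = (1+c)*(x-xstar)^2 := by linear_combination (-2*(x - xstar))*hcy
      rw [habs_s]
      nlinarith [mul_pos (show (0:ℝ) < 1+c by linarith) hsq]
    · -- |y| < 1 - 2α
      have h12 : 0 < 1 - 2*α := by linarith
      have he : (1 - 2*α) * xstar = y := by
        rw [hxstar]; field_simp
      have hy2 : y^2 < (1-2*α)^2 := by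
        nlinarith [sq_abs y, abs_nonneg y, mul_pos (show (0:ℝ) < (1-2*α) - |y| by linarith)
          (show (0:ℝ) < (1-2*α) + |y| by nlinarith [abs_nonneg y])]
      have he2 : y^2 = (1-2*α)^2 * xstar^2 := by
        linear_combination (-((1-2*α)*xstar + y))*he
      have hs2 : xstar^2 < 1 := by nlinarith [sq_nonneg (1-2*α), he2, sq_nonneg xstar]
      have habs_s : |xstar^2 - 1| = 1 - xstar^2 := by
        rw [abs_of_nonpos (by linarith)]; ring
      have hcy : c*y = (c-1)*xstar := by linear_combination (-c)*he - xstar*hac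
      have habs : -(x^2 - 1) ≤ |x^2 - 1| := neg_le_abs _
      have key : 1 - x^2 + c*(x-y)^2 - (1 - xstar^2 + c*(xstar-y)^2)
          = (c-1)*(x-xstar)^2 := by linear_combination (-2*(x - xstar))*hcy
      rw [habs_s]
      nlinarith [mul_pos (show (0:ℝ) < c-1 by linarith) hsq]
    · -- 1 - 2α ≤ |y| ≤ 1 + 2α
      have hay1 : |y| ≤ 1 + 2*α := not_lt.mp h1
      have hay2 : 1 - 2*α ≤ |y| := not_lt.mp h2
      have hyne : y ≠ 0 := by
        intro h; rw [h] at hay2; simp at hay2; linarith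
      rcases lt_or_gt_of_ne hyne with hneg | hpos
      · -- y < 0, xstar = -1
        have hxs : xstar = -1 := by
          rw [hxstar, abs_of_neg hneg, div_neg, div_self hyne]
        subst hxs
        have hya : |y| = -y := abs_of_neg hneg
        have h := caseC α c (-y) (-x) hα0 hα hac (by rw [hya] at hay2; linarith)
          (by rw [hya] at hay1; linarith) (by intro hc; apply hx; linarith [neg_eq_iff_eq_neg.mp hc])
        rw [show (-x:ℝ)^2 - 1 = x^2 - 1 from by ring] at h
        rw [show ((1:ℝ) - -y) = -(-1 - y) from by ring, neg_sq] at h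
        rw [show ((-x:ℝ) - -y) = -(x - y) from by ring, neg_sq] at h
        have hz : |((-1:ℝ))^2 - 1| = 0 := by norm_num
        rw [hz]
        linarith
      · -- y > 0, xstar = 1
        have hxs : xstar = 1 := by
          rw [hxstar, abs_of_pos hpos, div_self hyne]
        subst hxs
        have hya : |y| = y := abs_of_pos hpos
        have h := caseC α c y x hα0 hα hac (by rw [hya] at hay2; linarith)
          (by rw [hya] at hay1; linarith) hx
        have hz : |((1:ℝ))^2 - 1| = 0 := by norm_num
        rw [hz]
        linarith
  constructor
  · intro x
    by_cases h : x = xstar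
    · subst h; exact le_refl _
    · exact le_of_lt (hstrict x h)
  · intro x hmin
    by_contra hne
    have h1 := hstrict x hne
    have h2 := hmin xstar
    linarith
end
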